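/- arXiv:1703.01474 — 6 statements merged into one kernel-verified Lean document; each statement's English description precedes it below -/
import Mathlib

section
/- Let Q be a complex polynomial with |Q(0)| ≥ 2ε and |Q(u)| ≤ 2 for all u on the unit circle |u| = 1, where 0 < ε ≤ 1. Then for 0 < ν < 1/2, the maximum of |Q| on the circle of radius ν centered at 1−ν satisfies max_{u ∈ ∂D_ν(1−ν)} |Q(u)| ≥ 2ε^{(1−ν)/ν}. -/
open Complex

/-- Algebraic helper: if `Re z ≥ 1/2` then `1 - z⁻¹` is in the closed unit disk. -/
lemma aux_le_one {z : ℂ} (hz : (1:ℝ)/2 ≤ z.re) : ‖1 - z⁻¹‖ ≤ 1 := by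
  have hz0 : z ≠ 0 := by
    intro h; rw [h] at hz; norm_num at hz
  have h1 : (1 : ℂ) - z⁻¹ = (z - 1) / z := by field_simp
  rw [h1, norm_div]
  rw [div_le_one (norm_pos_iff.mpr hz0)]
  have : Complex.normSq (z - 1) ≤ Complex.normSq z := by
    simp only [Complex.normSq_apply, Complex.sub_re, Complex.sub_im, Complex.one_re,
      Complex.one_im]
    nlinarith [hz]
  calc ‖z - 1‖ = Real.sqrt (Complex.normSq (z - 1)) := Complex.norm_def _
    _ ≤ Real.sqrt (Complex.normSq z) := Real.sqrt_le_sqrt this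
    _ = ‖z‖ := (Complex.norm_def _).symm

/-- Algebraic helper: if `Re z = 1/2` then `1 - z⁻¹` lies on the unit circle. -/
lemma aux_eq_one {z : ℂ} (hz : z.re = (1:ℝ)/2) : ‖1 - z⁻¹‖ = 1 := by
  have hz0 : z ≠ 0 := by
    intro h; rw [h] at hz; norm_num at hz
  have h1 : (1 : ℂ) - z⁻¹ = (z - 1) / z := by field_simp
  rw [h1, norm_div]
  rw [div_eq_one_iff_eq (norm_ne_zero_iff.mpr hz0)]
  have : Complex.normSq (z - 1) = Complex.normSq z := by
    simp only [Complex.normSq_apply, Complex.sub_re, Complex.sub_im, Complex.one_re,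
      Complex.one_im]
    nlinarith [hz]
  rw [Complex.norm_def, Complex.norm_def, this]

/-- Algebraic helper: if `Re z = 1/(2ν)` then `1 - z⁻¹` lies on the circle of radius `ν`
centered at `1 - ν`. -/
lemma aux_on_circle {z : ℂ} {ν : ℝ} (hν : 0 < ν) (hz : z.re = 1/(2*ν)) :
    ‖(1 - z⁻¹) - (1 - (ν:ℂ))‖ = ν := by
  have hz0 : z ≠ 0 := by
    intro h; rw [h] at hz; simp at hz
    exact absurd hz.symm (by positivity)
  have h1 : (1 : ℂ) - z⁻¹ - (1 - (ν:ℂ)) = ((ν:ℂ) * z - 1) / z := by field_simp; ring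
  rw [h1, norm_div]
  rw [div_eq_iff (norm_ne_zero_iff.mpr hz0)]
  have key : Complex.normSq ((ν:ℂ) * z - 1) = ν^2 * Complex.normSq z := by
    simp only [Complex.normSq_apply, Complex.sub_re, Complex.sub_im, Complex.one_re,
      Complex.one_im, Complex.mul_re, Complex.mul_im, Complex.ofReal_re, Complex.ofReal_im]
    have h2 : ν * z.re = 1/2 := by rw [hz]; field_simp
    nlinarith [h2]
  rw [Complex.norm_def, Complex.norm_def, key, Real.sqrt_mul (by positivity),
    Real.sqrt_sq hν.le]

/-- If `|Q(0)| ≥ 2ε` and `|Q| ≤ 2` on the unit circle, then for `0 < ν < 1/2` the maximum of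
`|Q|` on the circle of radius `ν` centered at `1−ν` is at least `2 ε^{(1−ν)/ν}`. -/
theorem stmt5 (Q : Polynomial ℂ) (ε ν : ℝ) (hε0 : 0 < ε) (hε1 : ε ≤ 1)
    (hν0 : 0 < ν) (hν : ν < 1 / 2)
    (h0 : 2 * ε ≤ ‖Q.eval 0‖)
    (hcirc : ∀ u : ℂ, ‖u‖ = 1 → ‖Q.eval u‖ ≤ 2) :
    ∃ u : ℂ, ‖u - (1 - ν)‖ = ν ∧
      2 * ε ^ ((1 - ν) / ν) ≤ ‖Q.eval u‖ := by
  have hν1 : 0 < 1 - ν := by linarith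
  set r : ℝ := ν / (1 - ν) with hr_def
  set s : ℝ := (1 - ν) / (2 * ν) with hs_def
  have hr0 : 0 < r := by positivity
  have hr1 : r ≤ 1 := by
    rw [hr_def, div_le_one hν1]; linarith
  have hs0 : 0 < s := by positivity
  -- the transplanted function on the strip
  set f : ℂ → ℂ := fun t => Q.eval (1 - ((1:ℂ)/2 + (s:ℂ) * t)⁻¹) with hf_def
  -- maximum point on the circle
  obtain ⟨u₀, hu₀mem, hu₀max⟩ :=
    (isCompact_sphere ((1 - ν : ℝ) : ℂ) ν).exists_isMaxOn
      (NormedSpace.sphere_nonempty.mpr hν0.le)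
      ((continuous_norm.comp Q.continuous).continuousOn)
  set M : ℝ := ‖Q.eval u₀‖ with hM_def
  have hM0 : 0 ≤ M := norm_nonneg _
  -- real part computation
  have hre : ∀ t : ℂ, ((1:ℂ)/2 + (s:ℂ) * t).re = 1/2 + s * t.re := by
    intro t; simp [Complex.add_re, Complex.mul_re, Complex.ofReal_re, Complex.ofReal_im]
  -- differentiability on an open superset of the closed strip
  have hdo : DifferentiableOn ℂ f {t : ℂ | 0 < ((1:ℂ)/2 + (s:ℂ) * t).re} := by
    apply (Q.differentiable).comp_differentiableOn
    apply DifferentiableOn.const_sub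
    apply DifferentiableOn.inv
    · exact ((differentiable_const _).add ((differentiable_const _).mul differentiable_id)).differentiableOn
    · intro t ht h
      simp only [Set.mem_setOf_eq] at ht
      rw [h] at ht
      simp at ht
  have hopen : IsOpen {t : ℂ | 0 < ((1:ℂ)/2 + (s:ℂ) * t).re} :=
    isOpen_lt continuous_const (Complex.continuous_re.comp (by fun_prop))
  have hsub : Complex.HadamardThreeLines.verticalClosedStrip 0 1 ⊆
      {t : ℂ | 0 < ((1:ℂ)/2 + (s:ℂ) * t).re} := by
    intro t ht
    have h1 : 0 ≤ t.re := ht.1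
    simp only [Set.mem_setOf_eq, hre]
    nlinarith
  have hclos : closure (Complex.HadamardThreeLines.verticalStrip 0 1) ⊆
      Complex.HadamardThreeLines.verticalClosedStrip 0 1 := by
    have := Complex.continuous_re.closure_preimage_subset (Set.Ioo (0:ℝ) 1)
    refine subset_trans this ?_
    rw [closure_Ioo (by norm_num : (0:ℝ) ≠ 1)]
    exact fun x hx => hx
  have hd : DiffContOnCl ℂ f (Complex.HadamardThreeLines.verticalStrip 0 1) := by
    constructor
    · exact hdo.mono (fun t ht => hsub ⟨ht.1.le, ht.2.le⟩)
    · exact (hdo.continuousOn).mono (subset_trans hclos hsub)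
  -- membership of all strip points in the closed unit ball after transplanting
  have hball : ∀ t : ℂ, t ∈ Complex.HadamardThreeLines.verticalClosedStrip 0 1 →
      ‖1 - ((1:ℂ)/2 + (s:ℂ) * t)⁻¹‖ ≤ 1 := by
    intro t ht
    apply aux_le_one
    rw [hre]
    nlinarith [ht.1]
  -- boundedness
  obtain ⟨C, hC⟩ := (isCompact_closedBall (0:ℂ) 1).exists_bound_of_continuousOn
    (Q.continuous.continuousOn)
  have hB : BddAbove ((norm ∘ f) '' Complex.HadamardThreeLines.verticalClosedStrip 0 1) := by
    refine ⟨C, ?_⟩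
    rintro x ⟨t, ht, rfl⟩
    have := hball t ht
    have hmem : (1 - ((1:ℂ)/2 + (s:ℂ) * t)⁻¹) ∈ Metric.closedBall (0:ℂ) 1 := by
      simpa [Metric.mem_closedBall, Complex.dist_eq] using this
    simpa [hf_def] using hC _ hmem
  -- edge bounds
  have ha : ∀ t : ℂ, t ∈ Complex.re ⁻¹' {0} → ‖f t‖ ≤ 2 := by
    intro t ht
    simp only [Set.mem_preimage, Set.mem_singleton_iff] at ht
    apply hcirc
    apply aux_eq_one
    rw [hre, ht]; ring
  have hb : ∀ t : ℂ, t ∈ Complex.re ⁻¹' {1} → ‖f t‖ ≤ M := by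
    intro t ht
    simp only [Set.mem_preimage, Set.mem_singleton_iff] at ht
    have hzre : ((1:ℂ)/2 + (s:ℂ) * t).re = 1/(2*ν) := by
      rw [hre, ht, hs_def]; field_simp; ring
    have hc : ((1 - ν : ℝ) : ℂ) = 1 - (ν:ℂ) := by push_cast; ring
    have hcircmem : (1 - ((1:ℂ)/2 + (s:ℂ) * t)⁻¹) ∈ Metric.sphere ((1 - ν : ℝ) : ℂ) ν := by
      rw [Metric.mem_sphere, Complex.dist_eq, hc]
      exact aux_on_circle hν0 hzre
    exact hu₀max hcircmem
  -- the interpolation point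
  set t0 : ℂ := ((r : ℝ) : ℂ) with ht0_def
  have ht0re : t0.re = r := by simp [ht0_def]
  have ht0mem : t0 ∈ Complex.HadamardThreeLines.verticalClosedStrip 0 1 := by
    constructor <;> simp [ht0re, hr0.le, hr1]
  -- value at the interpolation point
  have hft0 : f t0 = Q.eval 0 := by
    have hsr : s * r = (1/2 : ℝ) := by
      rw [hs_def, hr_def]; field_simp
    have : (1:ℂ)/2 + (s:ℂ) * t0 = 1 := by
      rw [ht0_def]
      have h12 : ((s:ℂ)) * ((r:ℝ):ℂ) = ((s * r : ℝ) : ℂ) := by push_cast; ring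
      rw [h12, hsr]
      norm_num
    simp only [hf_def]
    rw [this]
    norm_num
  -- Hadamard three lines
  have key := Complex.HadamardThreeLines.norm_le_interp_of_mem_verticalClosedStrip₀₁'
    f ht0mem hd hB ha hb
  rw [hft0, ht0re] at key
  have key2 : 2 * ε ≤ 2 ^ (1 - r) * M ^ r := le_trans h0 key
  -- M is positive
  have hMpos : 0 < M := by
    by_contra h
    push_neg at h
    have hM_eq : M = 0 := le_antisymm h hM0
    rw [hM_eq, Real.zero_rpow hr0.ne'] at key2
    nlinarith
  -- conclude
  refine ⟨u₀, ?_, ?_⟩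
  · have hc : ((1 - ν : ℝ) : ℂ) = 1 - (ν:ℂ) := by push_cast; ring
    have := hu₀mem
    rw [Metric.mem_sphere, Complex.dist_eq, hc] at this
    exact this
  · -- show 2 * ε ^ ((1-ν)/ν) ≤ M
    have hinv : (1 - ν) / ν = 1 / r := by
      rw [hr_def]; field_simp
    rw [hinv]
    have hlhs0 : 0 ≤ 2 * ε ^ ((1:ℝ) / r) := by positivity
    rw [← Real.rpow_le_rpow_iff hlhs0 hMpos.le hr0]
    have hexp : (2 * ε ^ ((1:ℝ)/r)) ^ r = 2 ^ r * ε := by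
      rw [Real.mul_rpow (by norm_num) (by positivity), ← Real.rpow_mul hε0.le,
        one_div, inv_mul_cancel₀ hr0.ne', Real.rpow_one]
    rw [hexp]
    -- from key2 : 2 * ε ≤ 2^(1-r) * M^r
    have h2 : (2:ℝ) ^ (1 - r) * 2 ^ r = 2 := by
      rw [← Real.rpow_add (by norm_num)]; norm_num
    have hp1 : (0:ℝ) < 2 ^ r := Real.rpow_pos_of_pos (by norm_num) _
    have hp2 : (0:ℝ) < 2 ^ (1 - r) := Real.rpow_pos_of_pos (by norm_num) _
    have hp3 : (0:ℝ) < M ^ r := Real.rpow_pos_of_pos hMpos _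
    nlinarith [mul_le_mul_of_nonneg_left key2 hp1.le]
end

section
/- Let c ∈ ℝ^{n+1} with ∑_{i=0}^n |c_i| ≤ 2 and let Q_c(v) = ∑_{i=0}^n c_i v^i. Then for 0 < a ≤ 1/8, sup over the circle |z−(1−4a)| = 4a of |Q_c(z)| is at most √(sup_{z ∈ B_{a,1}} |Q_c(z)|) · 2√(exp(9an)), where B_{a,1} is the segment [1−16a, 1]. -/
open Finset
set_option maxHeartbeats 1000000




/-- A root of `z + z⁻¹ = s` with `|s-1| = 1` and `|z| ≥ 1` has `|z| ≤ 2`. -/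
lemma root_bound (s z₀ : ℂ) (hz₀ : z₀ ≠ 0) (hs : z₀ + z₀⁻¹ = s)
    (h1 : ‖s - 1‖ = 1) (hr : 1 ≤ ‖z₀‖) : ‖z₀‖ ≤ 2 := by
  set R := Complex.normSq z₀ with hRdef
  have hRpos : 0 < R := Complex.normSq_pos.mpr hz₀
  have hkey : s * (R : ℂ) = z₀ * R + starRingEnd ℂ z₀ := by
    rw [← hs, Complex.inv_def, ← hRdef]
    push_cast
    have hRne : (R : ℂ) ≠ 0 := by exact_mod_cast hRpos.ne'
    field_simp
  rw [Complex.ext_iff] at hkey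
  obtain ⟨hx, hy⟩ := hkey
  simp only [Complex.mul_re, Complex.mul_im, Complex.add_re, Complex.add_im,
    Complex.conj_re, Complex.conj_im, Complex.ofReal_re, Complex.ofReal_im] at hx hy
  set x := s.re
  set y := s.im
  set p := z₀.re
  set q := z₀.im
  have hpq : p ^ 2 + q ^ 2 = R := by
    rw [hRdef, Complex.normSq_apply]; ring
  have hcirc : (x - 1) ^ 2 + y ^ 2 = 1 := by
    have h1' : ‖s - 1‖ ^ 2 = 1 := by rw [h1]; norm_num
    rw [Complex.sq_norm, Complex.normSq_apply, Complex.sub_re, Complex.sub_im] at h1'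
    simp only [Complex.one_re, Complex.one_im] at h1'
    nlinarith [h1']
  have hy2 : y ^ 2 = 2 * x - x ^ 2 := by nlinarith [hcirc]
  have hsq := Complex.sq_norm z₀
  have hgoal : R ≤ 4 := by
    by_contra hR4
    push_neg at hR4
    have hx' : x * R = p * (R + 1) := by linarith [hx]
    have hy' : y * R = q * (R - 1) := by linarith [hy]
    have hx2 : x ^ 2 * R ^ 2 = p ^ 2 * (R + 1) ^ 2 := by
      linear_combination (x * R + p * (R + 1)) * hx'
    have hy2' : y ^ 2 * R ^ 2 = q ^ 2 * (R - 1) ^ 2 := by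
      linear_combination (y * R + q * (R - 1)) * hy'
    have hE : x ^ 2 * R ^ 2 * (R - 1) ^ 2 + y ^ 2 * R ^ 2 * (R + 1) ^ 2
        = R * (R + 1) ^ 2 * (R - 1) ^ 2 := by
      linear_combination (R-1)^2 * hx2 + (R+1)^2 * hy2' + (R+1)^2*(R-1)^2 * hpq
    have h5 : R ^ 2 * (2 * x * (R + 1) ^ 2 - 4 * R * x ^ 2)
        = R * (R + 1) ^ 2 * (R - 1) ^ 2 := by
      linear_combination hE - R^2*(R+1)^2 * hy2
    have h6 : 4 * R * (2 * x * (R + 1) ^ 2 - 4 * R * x ^ 2) ≤ (R + 1) ^ 4 := by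
      nlinarith [sq_nonneg (4 * R * x - (R + 1) ^ 2)]
    have h6' := mul_le_mul_of_nonneg_left h6 (sq_nonneg R)
    have h5' : 4*R*(R ^ 2 * (2 * x * (R + 1) ^ 2 - 4 * R * x ^ 2))
        = 4*R*(R * (R + 1) ^ 2 * (R - 1) ^ 2) := by linear_combination 4*R*h5
    have h7' : (R^2*(R+1)^2) * (4*(R-1)^2) ≤ (R^2*(R+1)^2) * ((R+1)^2) := by
      linarith [h6', h5']
    have hPpos : 0 < R^2*(R+1)^2 :=
      mul_pos (pow_pos hRpos 2) (pow_pos (by linarith) 2)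
    have h8 : 4*(R-1)^2 ≤ (R+1)^2 := le_of_mul_le_mul_left h7' hPpos
    nlinarith [h8, hR4, sq_nonneg (R - 4)]
  nlinarith [hgoal, norm_nonneg z₀, hsq]



lemma Qbound (n : ℕ) (c : Fin (n + 1) → ℝ) (hc : ∑ i, |c i| ≤ 2) (w : ℂ) (R : ℝ)
    (hR : 1 ≤ R) (hw : ‖w‖ ≤ R) :
    ‖∑ i, (c i : ℂ) * w ^ (i : ℕ)‖ ≤ 2 * R ^ n := by
  calc ‖∑ i, (c i : ℂ) * w ^ (i : ℕ)‖
      ≤ ∑ i, ‖(c i : ℂ) * w ^ (i : ℕ)‖ := norm_sum_le _ _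
    _ ≤ ∑ i, |c i| * R ^ n := by
        apply Finset.sum_le_sum
        intro i _
        rw [norm_mul, norm_pow, Complex.norm_real, Real.norm_eq_abs]
        apply mul_le_mul_of_nonneg_left _ (abs_nonneg _)
        calc ‖w‖ ^ (i : ℕ) ≤ R ^ (i : ℕ) :=
              pow_le_pow_left₀ (norm_nonneg w) hw _
          _ ≤ R ^ n := pow_le_pow_right₀ hR (Fin.is_le i)
    _ = (∑ i, |c i|) * R ^ n := by rw [← Finset.sum_mul]
    _ ≤ 2 * R ^ n := by
        apply mul_le_mul_of_nonneg_right hc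
        positivity

lemma Qdiff (n : ℕ) (c : Fin (n + 1) → ℝ) :
    Differentiable ℂ (fun w : ℂ => ∑ i, (c i : ℂ) * w ^ (i : ℕ)) := by
  apply Differentiable.fun_sum
  intro i _
  exact (differentiable_const _).mul (differentiable_pow _)

/-- Hadamard three-circles estimate: for `c` with `∑|c_i| ≤ 2` and `Q_c(v) = ∑ c_i v^i`,
the sup of `|Q_c|` on the circle `|z−(1−4a)| = 4a` is at most
`√(sup_{x ∈ [1−16a,1]} |Q_c(x)|) · 2 √(exp(9an))`. -/
theorem stmt9 (n : ℕ) (a : ℝ) (ha0 : 0 < a) (ha : a ≤ 1 / 8)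
    (c : Fin (n + 1) → ℝ) (hc : ∑ i, |c i| ≤ 2) (z : ℂ)
    (hz : ‖z - (1 - 4 * a)‖ = 4 * a) :
    ‖∑ i, (c i : ℂ) * z ^ (i : ℕ)‖ ≤
      Real.sqrt (sSup {y : ℝ | ∃ x ∈ Set.Icc (1 - 16 * a) (1 : ℝ),
          y = ‖∑ i, (c i : ℂ) * (x : ℂ) ^ (i : ℕ)‖})
        * (2 * Real.sqrt (Real.exp (9 * a * n))) := by
  set S := {y : ℝ | ∃ x ∈ Set.Icc (1 - 16 * a) (1 : ℝ),
      y = ‖∑ i, (c i : ℂ) * (x : ℂ) ^ (i : ℕ)‖} with hSdef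
  set M := sSup S with hMdef
  have hSne : S.Nonempty := ⟨_, 1, ⟨by linarith, le_refl 1⟩, rfl⟩
  have hmem2 : ∀ x ∈ Set.Icc (1 - 16 * a) (1 : ℝ),
      ‖∑ i, (c i : ℂ) * (x : ℂ) ^ (i : ℕ)‖ ≤ 2 := by
    intro x hx
    have habs : ‖(x : ℂ)‖ ≤ 1 := by
      rw [Complex.norm_real, Real.norm_eq_abs]
      rw [abs_le]
      exact ⟨by linarith [hx.1], hx.2⟩
    have := Qbound n c hc (x : ℂ) 1 le_rfl habs
    simpa using this
  have hSbdd : BddAbove S := by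
    refine ⟨2, ?_⟩
    rintro y ⟨x, hx, rfl⟩
    exact hmem2 x hx
  have hub : ∀ x ∈ Set.Icc (1 - 16 * a) (1 : ℝ),
      ‖∑ i, (c i : ℂ) * (x : ℂ) ^ (i : ℕ)‖ ≤ M := by
    intro x hx
    exact le_csSup hSbdd ⟨x, hx, rfl⟩
  have hM0 : 0 ≤ M :=
    le_trans (norm_nonneg _) (hub 1 ⟨by linarith, le_rfl⟩)
  have hM2 : M ≤ 2 := csSup_le hSne (by rintro y ⟨x, hx, rfl⟩; exact hmem2 x hx)
  set K := 2 * Real.exp (9 * a * (n : ℝ)) with hKdef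
  have hexp1 : 1 ≤ Real.exp (9 * a * (n : ℝ)) := by
    have := Real.add_one_le_exp (9 * a * (n : ℝ))
    have h9 : 0 ≤ 9 * a * (n : ℝ) := by positivity
    linarith
  have hK2 : 2 ≤ K := by rw [hKdef]; nlinarith
  have hMK : M ≤ K := le_trans hM2 hK2
  set l := Real.log 4 with hldef
  have hl4 : Real.exp l = 4 := Real.exp_log (by norm_num)
  have hlpos : 0 < l := Real.log_pos (by norm_num)
  have h18 : (0:ℝ) ≤ 1 - 8 * a := by linarith
  -- the auxiliary function on the strip
  set φc : ℂ → ℂ := fun ξ =>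
    (1 - 8 * (a : ℂ)) + 4 * (a : ℂ) *
      (Complex.exp (ξ * (l : ℂ)) + Complex.exp (-(ξ * (l : ℂ)))) with hφc
  set F : ℂ → ℂ := fun ξ => ∑ i, (c i : ℂ) * (φc ξ) ^ (i : ℕ) with hFdef
  have hφdiff : Differentiable ℂ φc := by
    apply (differentiable_const _).add
    apply (differentiable_const _).mul
    apply Differentiable.add
    · exact Complex.differentiable_exp.comp (differentiable_id.mul_const _)
    · exact Complex.differentiable_exp.comp (differentiable_id.mul_const _).neg
  have hFdiff : Differentiable ℂ F := (Qdiff n c).comp hφdiff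
  have hre_mul : ∀ ξ : ℂ, (ξ * (l : ℂ)).re = ξ.re * l := by
    intro ξ
    simp [Complex.mul_re]
  -- edge bound at re = 0
  have hedge0 : ∀ ξ ∈ Complex.re ⁻¹' {0}, ‖F ξ‖ ≤ M := by
    intro ξ hξ
    have hξ0 : ξ.re = 0 := hξ
    set w := Complex.exp (ξ * (l : ℂ)) with hw
    have hw1 : ‖w‖ = 1 := by
      rw [hw, Complex.norm_exp, hre_mul, hξ0, zero_mul, Real.exp_zero]
    have hconj : Complex.exp (-(ξ * (l : ℂ))) = starRingEnd ℂ w := by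
      rw [hw, ← Complex.exp_conj]
      congr 1
      apply Complex.ext
      · simp [hre_mul, hξ0]
      · simp
    have hwre : |w.re| ≤ 1 := by
      calc |w.re| ≤ ‖w‖ := Complex.abs_re_le_norm w
        _ = 1 := hw1
    rw [abs_le] at hwre
    set x : ℝ := 1 - 8 * a + 4 * a * (2 * w.re) with hx
    have harg : φc ξ = (x : ℂ) := by
      rw [hφc]
      simp only
      rw [← hw, hconj, Complex.add_conj, hx]
      push_cast
      ring
    have hxmem : x ∈ Set.Icc (1 - 16 * a) (1 : ℝ) := by
      constructor
      · rw [hx]; nlinarith [hwre.1]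
      · rw [hx]; nlinarith [hwre.2]
    rw [hFdef]
    simp only [harg]
    exact hub x hxmem
  -- edge bound at re = 1
  have hedge1 : ∀ ξ ∈ Complex.re ⁻¹' {1}, ‖F ξ‖ ≤ K := by
    intro ξ hξ
    have hξ1 : ξ.re = 1 := hξ
    have hw1 : ‖Complex.exp (ξ * (l : ℂ))‖ = 4 := by
      rw [Complex.norm_exp, hre_mul, hξ1, one_mul, hl4]
    have hw2 : ‖Complex.exp (-(ξ * (l : ℂ)))‖ = 1 / 4 := by
      rw [Complex.norm_exp]
      have : (-(ξ * (l : ℂ))).re = -(ξ.re * l) := by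
        rw [Complex.neg_re, hre_mul]
      rw [this, hξ1, one_mul, Real.exp_neg, hl4]
      norm_num
    have hargle : ‖φc ξ‖ ≤ 1 + 9 * a := by
      rw [hφc]
      simp only
      calc ‖(1 - 8 * (a : ℂ)) + 4 * (a : ℂ) *
            (Complex.exp (ξ * (l : ℂ)) + Complex.exp (-(ξ * (l : ℂ))))‖
          ≤ ‖1 - 8 * (a : ℂ)‖ + ‖4 * (a : ℂ) *
            (Complex.exp (ξ * (l : ℂ)) + Complex.exp (-(ξ * (l : ℂ))))‖ :=
            norm_add_le _ _
        _ ≤ (1 - 8 * a) + 4 * a * (4 + 1 / 4) := by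
            apply add_le_add
            · have : (1 - 8 * (a : ℂ)) = ((1 - 8 * a : ℝ) : ℂ) := by push_cast; ring
              rw [this, Complex.norm_real, Real.norm_eq_abs, abs_of_nonneg h18]
            · rw [norm_mul]
              have h4a : ‖4 * (a : ℂ)‖ = 4 * a := by
                have : (4 * (a : ℂ)) = ((4 * a : ℝ) : ℂ) := by push_cast; ring
                rw [this, Complex.norm_real, Real.norm_eq_abs, abs_of_nonneg (by linarith)]
              rw [h4a]
              apply mul_le_mul_of_nonneg_left _ (by linarith)
              calc ‖Complex.exp (ξ * (l : ℂ)) + Complex.exp (-(ξ * (l : ℂ)))‖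
                  ≤ ‖Complex.exp (ξ * (l : ℂ))‖
                    + ‖Complex.exp (-(ξ * (l : ℂ)))‖ := norm_add_le _ _
                _ = 4 + 1 / 4 := by rw [hw1, hw2]
        _ = 1 + 9 * a := by ring
    have hQb := Qbound n c hc (φc ξ) (1 + 9 * a) (by linarith) hargle
    rw [hFdef]
    calc ‖∑ i, (c i : ℂ) * (φc ξ) ^ (i : ℕ)‖ ≤ 2 * (1 + 9 * a) ^ n := hQb
      _ ≤ K := by
          rw [hKdef]
          have hpow : (1 + 9 * a) ^ n ≤ Real.exp (9 * a * (n : ℝ)) := by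
            calc (1 + 9 * a) ^ n ≤ (Real.exp (9 * a)) ^ n := by
                  apply pow_le_pow_left₀ (by linarith)
                  linarith [Real.add_one_le_exp (9 * a)]
              _ = Real.exp (9 * a * (n : ℝ)) := by
                  rw [← Real.exp_nat_mul, mul_comm]
          linarith
  -- global bound on the strip
  have hB : BddAbove ((norm ∘ F) '' Complex.HadamardThreeLines.verticalClosedStrip 0 1) := by
    refine ⟨2 * 4 ^ n, ?_⟩
    rintro y ⟨ξ, hξ, rfl⟩
    have hξre : ξ.re ∈ Set.Icc (0:ℝ) 1 := hξ
    have hw1 : ‖Complex.exp (ξ * (l : ℂ))‖ ≤ 4 := by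
      rw [Complex.norm_exp, hre_mul]
      calc Real.exp (ξ.re * l) ≤ Real.exp l := by
            apply Real.exp_le_exp.mpr
            nlinarith [hξre.1, hξre.2, hlpos]
        _ = 4 := hl4
    have hw2 : ‖Complex.exp (-(ξ * (l : ℂ)))‖ ≤ 4 := by
      rw [Complex.norm_exp]
      have : (-(ξ * (l : ℂ))).re = -(ξ.re * l) := by rw [Complex.neg_re, hre_mul]
      rw [this]
      calc Real.exp (-(ξ.re * l)) ≤ Real.exp 0 := by
            apply Real.exp_le_exp.mpr
            nlinarith [hξre.1, hlpos]
        _ = 1 := Real.exp_zero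
        _ ≤ 4 := by norm_num
    have hargle : ‖φc ξ‖ ≤ 4 := by
      rw [hφc]
      simp only
      calc ‖(1 - 8 * (a : ℂ)) + 4 * (a : ℂ) *
            (Complex.exp (ξ * (l : ℂ)) + Complex.exp (-(ξ * (l : ℂ))))‖
          ≤ ‖1 - 8 * (a : ℂ)‖ + ‖4 * (a : ℂ) *
            (Complex.exp (ξ * (l : ℂ)) + Complex.exp (-(ξ * (l : ℂ))))‖ :=
            norm_add_le _ _
        _ ≤ (1 - 8 * a) + 4 * a * (4 + 4) := by
            apply add_le_add
            · have : (1 - 8 * (a : ℂ)) = ((1 - 8 * a : ℝ) : ℂ) := by push_cast; ring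
              rw [this, Complex.norm_real, Real.norm_eq_abs, abs_of_nonneg h18]
            · rw [norm_mul]
              have h4a : ‖4 * (a : ℂ)‖ = 4 * a := by
                have : (4 * (a : ℂ)) = ((4 * a : ℝ) : ℂ) := by push_cast; ring
                rw [this, Complex.norm_real, Real.norm_eq_abs, abs_of_nonneg (by linarith)]
              rw [h4a]
              apply mul_le_mul_of_nonneg_left _ (by linarith)
              calc ‖Complex.exp (ξ * (l : ℂ)) + Complex.exp (-(ξ * (l : ℂ)))‖
                  ≤ ‖Complex.exp (ξ * (l : ℂ))‖
                    + ‖Complex.exp (-(ξ * (l : ℂ)))‖ := norm_add_le _ _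
                _ ≤ 4 + 4 := add_le_add hw1 hw2
        _ ≤ 4 := by linarith
    have := Qbound n c hc (φc ξ) 4 (by norm_num) hargle
    simpa [hFdef] using this
  -- find the preimage point z₀ on the annulus
  have ha4 : (4 * (a : ℂ)) ≠ 0 := by
    simp only [ne_eq, mul_eq_zero]
    push_neg
    constructor
    · norm_num
    · exact_mod_cast ha0.ne'
  set s : ℂ := (z - (1 - 8 * (a : ℂ))) / (4 * (a : ℂ)) with hsdef
  have hs1 : ‖s - 1‖ = 1 := by
    have hrw : s - 1 = (z - (1 - 4 * (a : ℂ))) / (4 * (a : ℂ)) := by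
      rw [hsdef]
      rw [eq_div_iff ha4, sub_mul, div_mul_cancel₀ _ ha4]
      ring
    rw [hrw, norm_div, hz]
    have h4a : ‖4 * (a : ℂ)‖ = 4 * a := by
      have : (4 * (a : ℂ)) = ((4 * a : ℝ) : ℂ) := by push_cast; ring
      rw [this, Complex.norm_real, Real.norm_eq_abs, abs_of_nonneg (by linarith)]
    rw [h4a]
    field_simp
  obtain ⟨d, hd⟩ := IsAlgClosed.exists_pow_nat_eq (k := ℂ) (s ^ 2 - 4) (n := 2) (by norm_num)
  obtain ⟨z₀, hz₀ne, hz₀s, h1r⟩ :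
      ∃ z₀ : ℂ, z₀ ≠ 0 ∧ z₀ + z₀⁻¹ = s ∧ 1 ≤ ‖z₀‖ := by
    set z₁ : ℂ := (s + d) / 2 with hz₁def
    set z₂ : ℂ := (s - d) / 2 with hz₂def
    have hprod : z₁ * z₂ = 1 := by
      rw [hz₁def, hz₂def]
      field_simp
      linear_combination -hd
    have hz₁ : z₁ ≠ 0 := left_ne_zero_of_mul_eq_one hprod
    have hz₂ : z₂ ≠ 0 := right_ne_zero_of_mul_eq_one hprod
    have hinv1 : z₁⁻¹ = z₂ := inv_eq_of_mul_eq_one_right hprod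
    have hinv2 : z₂⁻¹ = z₁ := inv_eq_of_mul_eq_one_right (by rw [mul_comm]; exact hprod)
    have hsum12 : z₁ + z₂ = s := by rw [hz₁def, hz₂def]; ring
    have habs : ‖z₁‖ * ‖z₂‖ = 1 := by
      rw [← norm_mul, hprod, norm_one]
    rcases le_total 1 (‖z₁‖) with h | h
    · exact ⟨z₁, hz₁, by rw [hinv1]; exact hsum12, h⟩
    · refine ⟨z₂, hz₂, by rw [hinv2, add_comm]; exact hsum12, ?_⟩
      have h1pos : 0 < ‖z₁‖ := norm_pos_iff.mpr hz₁
      nlinarith [habs, h1pos, h]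
  have h2r : ‖z₀‖ ≤ 2 := root_bound s z₀ hz₀ne hz₀s hs1 h1r
  -- the point ξ₀ in the strip
  set ξ₀ : ℂ := Complex.log z₀ / (l : ℂ) with hξ₀def
  have hlne : (l : ℂ) ≠ 0 := by exact_mod_cast hlpos.ne'
  have hmul : ξ₀ * (l : ℂ) = Complex.log z₀ := by
    rw [hξ₀def, div_mul_cancel₀ _ hlne]
  have hexp : Complex.exp (ξ₀ * (l : ℂ)) = z₀ := by
    rw [hmul, Complex.exp_log hz₀ne]
  have hexpneg : Complex.exp (-(ξ₀ * (l : ℂ))) = z₀⁻¹ := by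
    rw [Complex.exp_neg, hexp]
  have hφz : φc ξ₀ = z := by
    rw [hφc]
    simp only
    rw [hexp, hexpneg, hz₀s, hsdef]
    field_simp
    rw [mul_div_cancel_left₀ _ (show (a:ℂ) ≠ 0 by exact_mod_cast ha0.ne')]
    ring
  have hFval : F ξ₀ = ∑ i, (c i : ℂ) * z ^ (i : ℕ) := by
    rw [hFdef]
    simp only [hφz]
  have htre : ξ₀.re = Real.log (‖z₀‖) / l := by
    rw [hξ₀def, Complex.div_ofReal_re, Complex.log_re]
  have hlog2 : Real.log 4 = 2 * Real.log 2 := by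
    rw [show (4:ℝ) = 2 ^ 2 by norm_num, Real.log_pow]
    push_cast
    ring
  have ht0 : 0 ≤ ξ₀.re := by
    rw [htre]
    apply div_nonneg _ hlpos.le
    exact Real.log_nonneg h1r
  have ht12 : ξ₀.re ≤ 1 / 2 := by
    rw [htre]
    rw [div_le_iff₀ hlpos]
    have hlog_le : Real.log (‖z₀‖) ≤ Real.log 2 :=
      Real.log_le_log (by linarith) h2r
    rw [hldef, hlog2]
    linarith
  have ht1 : ξ₀.re ≤ 1 := by linarith
  have hmem : ξ₀ ∈ Complex.HadamardThreeLines.verticalClosedStrip 0 1 :=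
    Set.mem_preimage.mpr ⟨ht0, ht1⟩
  have hada := Complex.HadamardThreeLines.norm_le_interp_of_mem_verticalClosedStrip₀₁'
    F hmem hFdiff.diffContOnCl hB hedge0 hedge1
  rw [hFval] at hada
  -- final arithmetic
  set t := ξ₀.re with htdef
  have hRHS0 : 0 ≤ Real.sqrt M * (2 * Real.sqrt (Real.exp (9 * a * (n:ℝ)))) := by positivity
  rcases eq_or_lt_of_le hM0 with hMeq | hMpos
  · calc ‖∑ i, (c i : ℂ) * z ^ (i : ℕ)‖ ≤ M ^ (1 - t) * K ^ t := hada
      _ = 0 := by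
          rw [← hMeq, Real.zero_rpow (by intro h; linarith [ht12]), zero_mul]
      _ ≤ _ := hRHS0
  · have hKpos : 0 < K := by linarith
    have e1 : M ^ (1 - t) = M ^ ((1:ℝ)/2) * M ^ ((1:ℝ)/2 - t) := by
      rw [← Real.rpow_add hMpos]
      congr 1
      ring
    have e2 : K ^ ((1:ℝ)/2 - t) * K ^ t = K ^ ((1:ℝ)/2) := by
      rw [← Real.rpow_add hKpos]
      congr 1
      ring
    have step1 : M ^ (1 - t) * K ^ t ≤ M ^ ((1:ℝ)/2) * K ^ ((1:ℝ)/2) := by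
      calc M ^ (1 - t) * K ^ t = M ^ ((1:ℝ)/2) * (M ^ ((1:ℝ)/2 - t) * K ^ t) := by
            rw [e1]; ring
        _ ≤ M ^ ((1:ℝ)/2) * (K ^ ((1:ℝ)/2 - t) * K ^ t) := by
            apply mul_le_mul_of_nonneg_left _ (Real.rpow_nonneg hM0 _)
            apply mul_le_mul_of_nonneg_right _ (Real.rpow_nonneg hKpos.le _)
            exact Real.rpow_le_rpow hMpos.le hMK (by linarith)
        _ = M ^ ((1:ℝ)/2) * K ^ ((1:ℝ)/2) := by rw [e2]
    have hsqrtM : M ^ ((1:ℝ)/2) = Real.sqrt M := (Real.sqrt_eq_rpow M).symm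
    have hsqrtK : K ^ ((1:ℝ)/2) = Real.sqrt 2 * Real.sqrt (Real.exp (9 * a * (n:ℝ))) := by
      rw [← Real.sqrt_eq_rpow, hKdef, Real.sqrt_mul (by norm_num)]
    have hsqrt2 : Real.sqrt 2 ≤ 2 := by
      nlinarith [Real.sq_sqrt (by norm_num : (0:ℝ) ≤ 2), Real.sqrt_nonneg 2]
    calc ‖∑ i, (c i : ℂ) * z ^ (i : ℕ)‖ ≤ M ^ (1 - t) * K ^ t := hada
      _ ≤ M ^ ((1:ℝ)/2) * K ^ ((1:ℝ)/2) := step1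
      _ = Real.sqrt M * (Real.sqrt 2 * Real.sqrt (Real.exp (9 * a * (n:ℝ)))) := by
          rw [hsqrtM, hsqrtK]
      _ ≤ Real.sqrt M * (2 * Real.sqrt (Real.exp (9 * a * (n:ℝ)))) := by
          apply mul_le_mul_of_nonneg_left _ (Real.sqrt_nonneg M)
          apply mul_le_mul_of_nonneg_right hsqrt2 (Real.sqrt_nonneg _)
end

section
/- Let p(z) = ∑_{j=0}^M a_j z^j be a complex polynomial with |a_j| ≤ 1 for all 0 ≤ j ≤ M, and suppose p has a root of multiplicity at least k at z = 1. Then for every real x ∈ [1 − k/(9M), 1], |p(x)| ≤ (M+1)·(e/9)^k. -/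
lemma aux_pow_fact : ∀ k : ℕ, 1 ≤ k → (k:ℝ)^k ≤ Real.exp 1 ^ (k-1) * (k.factorial) := by
  intro k hk
  induction k, hk using Nat.le_induction with
  | base => simp
  | succ k hk ih =>
    have hkpos : (0:ℝ) < k := by exact_mod_cast hk
    have h1 : ((k:ℝ)+1)^k ≤ Real.exp 1 * (k:ℝ)^k := by
      have : ((k:ℝ)+1)^k = ((1 + 1/k)^k) * (k:ℝ)^k := by
        rw [← mul_pow]; field_simp
      rw [this]
      have h2 : (1 + 1/(k:ℝ))^k ≤ Real.exp 1 := by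
        have := Real.add_one_le_exp (1/(k:ℝ))
        calc (1 + 1/(k:ℝ))^k ≤ (Real.exp (1/k))^k := by
              apply pow_le_pow_left₀ (by positivity) (by linarith)
          _ = Real.exp 1 := by
              rw [← Real.exp_nat_mul]
              congr 1; field_simp
      exact mul_le_mul_of_nonneg_right h2 (by positivity)
    have : ((k:ℝ)+1)^(k+1) = ((k:ℝ)+1)^k * ((k:ℝ)+1) := pow_succ _ _
    calc ((k+1:ℕ):ℝ)^(k+1) = ((k:ℝ)+1)^k * ((k:ℝ)+1) := by push_cast; rw [← pow_succ]
      _ ≤ (Real.exp 1 * (k:ℝ)^k) * ((k:ℝ)+1) :=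
          mul_le_mul_of_nonneg_right h1 (by positivity)
      _ ≤ (Real.exp 1 * (Real.exp 1 ^ (k-1) * (k.factorial))) * ((k:ℝ)+1) := by
          have := mul_le_mul_of_nonneg_left ih (le_of_lt (Real.exp_pos 1))
          exact mul_le_mul_of_nonneg_right this (by positivity)
      _ = Real.exp 1 ^ ((k+1)-1) * ((k+1).factorial) := by
          have hs : k - 1 + 1 = k := Nat.succ_pred_eq_of_pos hk
          rw [Nat.factorial_succ]
          push_cast
          rw [show Real.exp 1 * (Real.exp 1 ^ (k-1) * (k.factorial)) * ((k:ℝ)+1)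
            = (Real.exp 1 ^ (k-1) * Real.exp 1 ^ 1) * ((k:ℝ)+1) * k.factorial by ring,
            ← pow_add, hs]
          ring

lemma aux_kj (k j : ℕ) (hk : 1 ≤ k) (hkj : k ≤ j) :
    (k:ℝ)^j ≤ Real.exp 1 ^ (k-1) * (j.factorial) := by
  have h1 : (k:ℝ)^j = (k:ℝ)^k * (k:ℝ)^(j-k) := by
    rw [← pow_add, Nat.add_sub_cancel' hkj]
  have h2 : (k.factorial : ℝ) * (k:ℝ)^(j-k) ≤ (j.factorial : ℝ) := by
    have := Nat.factorial_mul_pow_le_factorial (m := k) (n := j - k)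
    rw [Nat.add_sub_cancel' hkj] at this
    have h3 : k.factorial * k^(j-k) ≤ k.factorial * (k+1)^(j-k) :=
      Nat.mul_le_mul_left _ (Nat.pow_le_pow_left (Nat.le_succ k) _)
    exact_mod_cast h3.trans this
  calc (k:ℝ)^j = (k:ℝ)^k * (k:ℝ)^(j-k) := h1
    _ ≤ (Real.exp 1 ^ (k-1) * k.factorial) * (k:ℝ)^(j-k) :=
        mul_le_mul_of_nonneg_right (aux_pow_fact k hk) (by positivity)
    _ = Real.exp 1 ^ (k-1) * ((k.factorial:ℝ) * (k:ℝ)^(j-k)) := by ring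
    _ ≤ Real.exp 1 ^ (k-1) * (j.factorial) := by
        exact mul_le_mul_of_nonneg_left h2 (by positivity)

lemma aux_geom (n : ℕ) : ∑ i ∈ Finset.range n, (1/9:ℝ)^i ≤ 9/8 := by
  rw [geom_sum_eq (by norm_num)]
  have h : (0:ℝ) ≤ (1/9:ℝ)^n := by positivity
  rw [div_le_iff_of_neg (by norm_num)]
  linarith


/-- If `p` has degree at most `M`, all coefficients of modulus at most 1, and a root of
multiplicity at least `k` at `1`, then `|p(x)| ≤ (M+1)(e/9)^k` for all real
`x ∈ [1 − k/(9M), 1]`. -/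
theorem stmt10 (M k : ℕ) (hM : 0 < M) (p : Polynomial ℂ) (hdeg : p.natDegree ≤ M)
    (hcoeff : ∀ j, ‖p.coeff j‖ ≤ 1)
    (hroot : (Polynomial.X - Polynomial.C 1) ^ k ∣ p)
    (x : ℝ) (hx1 : 1 - (k : ℝ) / (9 * M) ≤ x) (hx2 : x ≤ 1) :
    ‖p.eval (x : ℂ)‖ ≤ (M + 1) * (Real.exp 1 / 9) ^ k := by
  have hM' : (0:ℝ) < M := by exact_mod_cast hM
  by_cases hp : p = 0
  · simp [hp]; positivity
  rcases Nat.eq_zero_or_pos k with hk0 | hk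
  · subst hk0
    have hx : x = 1 := le_antisymm hx2 (by simpa using hx1)
    subst hx
    rw [pow_zero, mul_one]
    push_cast
    calc ‖p.eval 1‖
        = ‖∑ i ∈ Finset.range (p.natDegree+1), p.coeff i * 1^i‖ := by
          rw [← Polynomial.eval_eq_sum_range]
      _ ≤ ∑ i ∈ Finset.range (p.natDegree+1), ‖p.coeff i * 1^i‖ :=
          norm_sum_le _ _
      _ ≤ ∑ i ∈ Finset.range (p.natDegree+1), 1 := by
          apply Finset.sum_le_sum; intro i _; simpa using hcoeff i
      _ = (p.natDegree + 1 : ℕ) := by simp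
      _ ≤ (M:ℝ) + 1 := by exact_mod_cast Nat.succ_le_succ hdeg
  · have hkM : k ≤ M := by
      have h1 : ((Polynomial.X - Polynomial.C (1:ℂ))^k).natDegree ≤ p.natDegree :=
        Polynomial.natDegree_le_of_dvd hroot hp
      rw [Polynomial.natDegree_pow, Polynomial.natDegree_X_sub_C, mul_one] at h1
      exact h1.trans hdeg
    set t : ℝ := 1 - x with ht_def
    have ht0 : 0 ≤ t := by simp only [ht_def, sub_nonneg]; linarith
    have ht : t ≤ (k:ℝ) / (9*M) := by simp only [ht_def]; linarith
    set q := Polynomial.taylor 1 p with hqdef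
    have hq0 : ∀ j < k, q.coeff j = 0 := by
      obtain ⟨g, hg⟩ := hroot
      have hdvd : Polynomial.X ^ k ∣ q := by
        refine ⟨Polynomial.taylor 1 g, ?_⟩
        rw [hqdef, hg, Polynomial.taylor_mul]
        congr 1
        rw [Polynomial.taylor_apply, Polynomial.pow_comp]
        congr 1
        simp [Polynomial.sub_comp]
      exact fun j hj => Polynomial.X_pow_dvd_iff.mp hdvd j hj
    have hqdeg : q.natDegree < M + 1 := by
      rw [hqdef, Polynomial.natDegree_taylor]; omega
    have hev : p.eval (x:ℂ) = q.eval ((x:ℂ) - 1) := by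
      rw [hqdef, Polynomial.taylor_eval]
      congr 1; ring
    have habs : ‖(x:ℂ) - 1‖ = t := by
      rw [show ((x:ℂ)-1) = ((x - 1 : ℝ) : ℂ) by push_cast; ring, Complex.norm_real, Real.norm_eq_abs,
        abs_of_nonpos (by linarith), ht_def]
      ring
    have hcb : ∀ j, j ≤ M → ‖q.coeff j‖ ≤ ((M:ℝ)+1) * (M.choose j) := by
      intro j hj
      rw [hqdef, Polynomial.taylor_coeff]
      have hdj : (Polynomial.hasseDeriv j p).natDegree < M - j + 1 :=
        lt_of_le_of_lt ((Polynomial.natDegree_hasseDeriv_le p j).trans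
          (Nat.sub_le_sub_right hdeg j)) (Nat.lt_succ_self _)
      rw [Polynomial.eval_eq_sum_range' hdj]
      calc ‖∑ i ∈ Finset.range (M-j+1), (Polynomial.hasseDeriv j p).coeff i * 1^i‖
          ≤ ∑ i ∈ Finset.range (M-j+1), ‖(Polynomial.hasseDeriv j p).coeff i * 1^i‖ :=
            norm_sum_le _ _
        _ ≤ ∑ i ∈ Finset.range (M-j+1), ((M.choose j : ℝ)) := by
            apply Finset.sum_le_sum; intro i hi
            rw [one_pow, mul_one, Polynomial.hasseDeriv_coeff, norm_mul, Complex.norm_natCast]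
            have hij : i + j ≤ M := by
              simp only [Finset.mem_range] at hi; omega
            calc ((i+j).choose j : ℝ) * ‖p.coeff (i+j)‖
                ≤ ((i+j).choose j : ℝ) * 1 :=
                  mul_le_mul_of_nonneg_left (hcoeff _) (by positivity)
              _ ≤ (M.choose j : ℝ) := by
                  rw [mul_one]
                  exact_mod_cast Nat.choose_le_choose j hij
        _ = ((M-j+1 : ℕ) : ℝ) * (M.choose j : ℝ) := by
            rw [Finset.sum_const, nsmul_eq_mul, Finset.card_range]
        _ ≤ ((M:ℝ)+1) * (M.choose j : ℝ) := by
            apply mul_le_mul_of_nonneg_right _ (by positivity)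
            have h1 : M - j + 1 ≤ M + 1 := by omega
            exact_mod_cast h1
    have hfac : ∀ j : ℕ, (0:ℝ) < j.factorial := fun j => by positivity
    calc ‖p.eval (x:ℂ)‖
        = ‖∑ j ∈ Finset.range (M+1), q.coeff j * ((x:ℂ)-1)^j‖ := by
          rw [hev, Polynomial.eval_eq_sum_range' hqdeg]
      _ ≤ ∑ j ∈ Finset.range (M+1), ‖q.coeff j * ((x:ℂ)-1)^j‖ :=
          norm_sum_le _ _
      _ = ∑ j ∈ Finset.Ico k (M+1), ‖q.coeff j * ((x:ℂ)-1)^j‖ := by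
          symm
          apply Finset.sum_subset
          · intro j hj
            simp only [Finset.mem_Ico] at hj
            simp only [Finset.mem_range]; omega
          · intro j hj hnj
            simp only [Finset.mem_range] at hj
            simp only [Finset.mem_Ico] at hnj
            rw [hq0 j (by omega)]
            simp
      _ ≤ ∑ j ∈ Finset.Ico k (M+1),
            ((M:ℝ)+1) * (Real.exp 1 ^ (k-1) * (1/9:ℝ)^k) * (1/9:ℝ)^(j-k) := by
          apply Finset.sum_le_sum
          intro j hj
          simp only [Finset.mem_Ico] at hj
          have hjM : j ≤ M := by omega
          rw [norm_mul, norm_pow, habs]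
          have key : (M.choose j:ℝ) * (k:ℝ)^j ≤ Real.exp 1 ^ (k-1) * (M:ℝ)^j := by
            have hc : (M.choose j : ℝ) ≤ (M:ℝ)^j / j.factorial := Nat.choose_le_pow_div j M
            have hkj := aux_kj k j hk hj.1
            calc (M.choose j:ℝ) * (k:ℝ)^j
                ≤ ((M:ℝ)^j / j.factorial) * (Real.exp 1 ^ (k-1) * j.factorial) :=
                  mul_le_mul hc hkj (by positivity) (by positivity)
              _ = Real.exp 1 ^ (k-1) * (M:ℝ)^j := by
                  field_simp
          have key2 : (M.choose j:ℝ) * ((k:ℝ)/(9*M))^j ≤ Real.exp 1 ^ (k-1) * (1/9:ℝ)^j := by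
            have h9 : (0:ℝ) < (9*(M:ℝ))^j := by positivity
            have e1 : (M.choose j:ℝ) * ((k:ℝ)/(9*M))^j
                = ((M.choose j:ℝ) * (k:ℝ)^j) / (9*(M:ℝ))^j := by
              rw [div_pow]; ring
            have e2 : Real.exp 1 ^ (k-1) * (1/9:ℝ)^j
                = (Real.exp 1 ^ (k-1) * (M:ℝ)^j) / (9*(M:ℝ))^j := by
              rw [mul_pow, div_pow, one_pow]
              field_simp
            rw [e1, e2]
            gcongr
          calc ‖q.coeff j‖ * t^j
              ≤ (((M:ℝ)+1) * (M.choose j)) * t^j :=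
                mul_le_mul_of_nonneg_right (hcb j hjM) (pow_nonneg ht0 j)
            _ ≤ ((M:ℝ)+1) * ((M.choose j) * ((k:ℝ)/(9*M))^j) := by
                rw [mul_assoc]
                gcongr
            _ ≤ ((M:ℝ)+1) * (Real.exp 1 ^ (k-1) * (1/9:ℝ)^j) := by
                gcongr
            _ = ((M:ℝ)+1) * (Real.exp 1 ^ (k-1) * (1/9:ℝ)^k) * (1/9:ℝ)^(j-k) := by
                rw [show (1/9:ℝ)^j = (1/9:ℝ)^k * (1/9:ℝ)^(j-k) by
                  rw [← pow_add, Nat.add_sub_cancel' hj.1]]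
                ring
      _ = ((M:ℝ)+1) * (Real.exp 1 ^ (k-1) * (1/9:ℝ)^k)
            * ∑ j ∈ Finset.Ico k (M+1), (1/9:ℝ)^(j-k) := by
            rw [Finset.mul_sum]
      _ ≤ ((M:ℝ)+1) * (Real.exp 1 ^ (k-1) * (1/9:ℝ)^k) * (9/8) := by
          apply mul_le_mul_of_nonneg_left _ (by positivity)
          rw [Finset.sum_Ico_eq_sum_range]
          have : ∀ i ∈ Finset.range (M+1-k), (1/9:ℝ)^(k+i-k) = (1/9:ℝ)^i := by
            intro i _; congr 1; omega
          rw [Finset.sum_congr rfl this]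
          exact aux_geom _
      _ ≤ ((M:ℝ)+1) * (Real.exp 1 / 9)^k := by
          have h2 : (9/8:ℝ) ≤ Real.exp 1 := by
            have := Real.add_one_le_exp 1; linarith
          have he : Real.exp 1 ^ (k-1) * (9/8) ≤ Real.exp 1 ^ k := by
            calc Real.exp 1 ^ (k-1) * (9/8) ≤ Real.exp 1 ^ (k-1) * Real.exp 1 :=
                  mul_le_mul_of_nonneg_left h2 (by positivity)
              _ = Real.exp 1 ^ k := by rw [← pow_succ, Nat.sub_add_cancel hk]
          calc ((M:ℝ)+1) * (Real.exp 1 ^ (k-1) * (1/9:ℝ)^k) * (9/8)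
              = ((M:ℝ)+1) * ((Real.exp 1 ^ (k-1) * (9/8)) * (1/9:ℝ)^k) := by ring
            _ ≤ ((M:ℝ)+1) * (Real.exp 1 ^ k * (1/9:ℝ)^k) := by gcongr
            _ = ((M:ℝ)+1) * (Real.exp 1 / 9)^k := by
                rw [div_pow, div_pow, one_pow]; ring
end

section
/- Let p(z) = ∑_{j=0}^M a_j z^j be a complex polynomial with |a_j| ≤ 9 for all j, having a root of multiplicity at least k at z = 1. Let A be the arc {e^{iθ} : |θ| ≤ k/(9M)} of the unit circle (which is symmetric around 1 and has arc length 2k/(9M)). Then sup_{z ∈ A} |p(z)| ≤ 9(M+1)·(e/9)^k. -/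
open Polynomial

/-- `|e^{iθ} - 1| ≤ |θ|`. -/
lemma abs_exp_I_sub_one_le (θ : ℝ) :
    ‖Complex.exp (θ * Complex.I) - 1‖ ≤ |θ| := by
  have hre : (Complex.exp (θ * Complex.I) - 1).re = Real.cos θ - 1 := by
    simp [Complex.exp_ofReal_mul_I_re]
  have him : (Complex.exp (θ * Complex.I) - 1).im = Real.sin θ := by
    simp [Complex.exp_ofReal_mul_I_im]
  have hcos := Real.one_sub_sq_div_two_le_cos (x := θ)
  have hpyth := Real.sin_sq_add_cos_sq θ
  have hsq : ‖Complex.exp (θ * Complex.I) - 1‖ ^ 2 ≤ θ ^ 2 := by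
    rw [Complex.sq_norm, Complex.normSq_apply, hre, him]
    nlinarith [hcos, hpyth]
  calc ‖Complex.exp (θ * Complex.I) - 1‖
      = Real.sqrt (‖Complex.exp (θ * Complex.I) - 1‖ ^ 2) := by
        rw [Real.sqrt_sq (norm_nonneg _)]
    _ ≤ Real.sqrt (θ ^ 2) := Real.sqrt_le_sqrt hsq
    _ = |θ| := Real.sqrt_sq_eq_abs θ

/-- Coefficient bound after dividing out `(X - 1)^k`. -/
lemma coeff_div_bound : ∀ (k : ℕ) (q : Polynomial ℂ),
    (∀ j, ‖((X - C 1) ^ k * q).coeff j‖ ≤ 9) →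
    ∀ j, ‖q.coeff j‖ ≤ 9 * ((j + k).choose k) := by
  intro k
  induction k with
  | zero => intro q h j; simpa using h j
  | succ k ih =>
    intro q h
    have hr : ∀ j, ‖((X - C 1) * q).coeff j‖ ≤ 9 * ((j + k).choose k) := by
      apply ih
      intro j
      have : (X - C 1) ^ k * ((X - C 1) * q) = (X - C 1) ^ (k + 1) * q := by ring
      rw [this]; exact h j
    -- relation between coefficients
    have hc0 : ((X - C 1) * q).coeff 0 = - q.coeff 0 := by
      simp [sub_mul, Polynomial.mul_coeff_zero]
    have hcs : ∀ n : ℕ, ((X - C 1) * q).coeff (n + 1) = q.coeff n - q.coeff (n + 1) := by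
      intro n
      simp [sub_mul, Polynomial.coeff_sub, Polynomial.coeff_X_mul]
    intro j
    induction j with
    | zero =>
      have := hr 0
      rw [hc0] at this
      simpa using this
    | succ n ihn =>
      have h1 := hr (n + 1)
      rw [hcs n] at h1
      have h2 : q.coeff (n + 1) = q.coeff n - (q.coeff n - q.coeff (n + 1)) := by ring
      have harg : q.coeff (n + 1) = q.coeff n + -(q.coeff n - q.coeff (n + 1)) := by ring
      have h3 : ‖q.coeff (n + 1)‖ ≤
          ‖q.coeff n‖ + ‖q.coeff n - q.coeff (n + 1)‖ := by
        nth_rewrite 1 [harg]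
        refine (norm_add_le _ _).trans ?_
        rw [norm_neg]
      have hpascal : (n + 1 + (k + 1)).choose (k + 1)
          = (n + (k + 1)).choose k + (n + (k + 1)).choose (k + 1) := by
        have : n + 1 + (k + 1) = (n + (k + 1)) + 1 := by ring
        rw [this, Nat.choose_succ_succ']
      have hcast : (9 : ℝ) * ((n + 1 + (k + 1)).choose (k + 1))
          = 9 * ((n + (k + 1)).choose (k + 1)) + 9 * ((n + (k + 1)).choose k) := by
        rw [hpascal]; push_cast; ring
      rw [hcast]
      have h4 : (9 : ℝ) * ((n + 1 + k).choose k) = 9 * ((n + (k + 1)).choose k) := by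
        norm_num [show n + 1 + k = n + (k + 1) by ring]
      calc ‖q.coeff (n + 1)‖
          ≤ ‖q.coeff n‖ + ‖q.coeff n - q.coeff (n + 1)‖ := h3
        _ ≤ 9 * ((n + (k + 1)).choose (k + 1)) + 9 * ((n + (k + 1)).choose k) := by
            refine add_le_add ihn ?_
            calc ‖q.coeff n - q.coeff (n + 1)‖ ≤ 9 * ((n + 1 + k).choose k) := h1
              _ = 9 * ((n + (k + 1)).choose k) := h4

/-- If `p` has degree at most `M`, all coefficients of modulus at most 9, and a root of
multiplicity at least `k` at `1`, then on the arc `{e^{iθ} : |θ| ≤ k/(9M)}` of the unit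
circle one has `|p| ≤ 9(M+1)(e/9)^k`. -/
theorem stmt11 (M k : ℕ) (hM : 0 < M) (p : Polynomial ℂ) (hdeg : p.natDegree ≤ M)
    (hcoeff : ∀ j, ‖p.coeff j‖ ≤ 9)
    (hroot : (Polynomial.X - Polynomial.C 1) ^ k ∣ p)
    (θ : ℝ) (hθ : |θ| ≤ (k : ℝ) / (9 * M)) :
    ‖p.eval (Complex.exp (θ * Complex.I))‖ ≤
      9 * (M + 1) * (Real.exp 1 / 9) ^ k := by
  have hRHSpos : (0 : ℝ) < 9 * (M + 1) * (Real.exp 1 / 9) ^ k := by positivity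
  by_cases hp0 : p = 0
  · simp [hp0]; positivity
  obtain ⟨q, hq⟩ := hroot
  have hXk : ((X - C 1 : Polynomial ℂ) ^ k) ≠ 0 := pow_ne_zero _ (X_sub_C_ne_zero 1)
  have hq0 : q ≠ 0 := by rintro rfl; simp at hq; exact hp0 hq
  have hdq : k + q.natDegree ≤ M := by
    have := Polynomial.natDegree_mul hXk hq0
    rw [← hq] at this
    rw [Polynomial.natDegree_pow, Polynomial.natDegree_X_sub_C] at this
    omega
  set z := Complex.exp (θ * Complex.I) with hz
  have hzabs : ‖z‖ = 1 := Complex.norm_exp_ofReal_mul_I θ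
  have hz1 : ‖z - 1‖ ≤ (k : ℝ) / (9 * M) :=
    (abs_exp_I_sub_one_le θ).trans hθ
  have hqcoeff : ∀ j, ‖q.coeff j‖ ≤ 9 * ((j + k).choose k) := by
    apply coeff_div_bound
    intro j
    rw [← hq]
    exact hcoeff j
  -- bound on |q(z)|
  have hqz : ‖q.eval z‖ ≤ (q.natDegree + 1) * (9 * (M.choose k)) := by
    rw [Polynomial.eval_eq_sum_range]
    calc ‖∑ i ∈ Finset.range (q.natDegree + 1), q.coeff i * z ^ i‖
        ≤ ∑ i ∈ Finset.range (q.natDegree + 1), ‖q.coeff i * z ^ i‖ := by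
          exact norm_sum_le _ _
      _ ≤ ∑ i ∈ Finset.range (q.natDegree + 1), (9 : ℝ) * (M.choose k) := by
          refine Finset.sum_le_sum fun i hi => ?_
          rw [norm_mul, norm_pow, hzabs, one_pow, mul_one]
          refine (hqcoeff i).trans ?_
          have hik : i + k ≤ M := by
            have : i ≤ q.natDegree := Finset.mem_range_succ_iff.mp hi
            omega
          have := Nat.choose_le_choose k hik
          have : ((i + k).choose k : ℝ) ≤ (M.choose k : ℝ) := by exact_mod_cast this
          nlinarith
      _ = (q.natDegree + 1) * (9 * (M.choose k)) := by
          rw [Finset.sum_const, Finset.card_range]; push_cast; ring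
  have hkey : ‖p.eval z‖ ≤
      ((k : ℝ) / (9 * M)) ^ k * ((q.natDegree + 1) * (9 * (M.choose k))) := by
    rw [hq, Polynomial.eval_mul, norm_mul, Polynomial.eval_pow, norm_pow]
    have heval : ((X - C 1 : Polynomial ℂ)).eval z = z - 1 := by simp
    rw [heval]
    refine mul_le_mul ?_ hqz (norm_nonneg _) (by positivity)
    exact pow_le_pow_left₀ (norm_nonneg _) hz1 k
  refine hkey.trans ?_
  -- arithmetic
  have hfact : ((k : ℝ)) ^ k ≤ Real.exp 1 ^ k * (Nat.factorial k) := by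
    have h1 := Real.pow_div_factorial_le_exp (x := (k : ℝ)) (Nat.cast_nonneg k) k
    have h2 : Real.exp k = Real.exp 1 ^ k := by
      rw [← Real.exp_nat_mul]; norm_num
    have hfpos : (0 : ℝ) < (Nat.factorial k) := by positivity
    rw [div_le_iff₀ hfpos] at h1
    rw [h2] at h1
    exact h1
  have hchoose : (M.choose k : ℝ) * (Nat.factorial k) ≤ (M : ℝ) ^ k := by
    have := (Nat.choose_le_descFactorial M k).trans (Nat.descFactorial_le_pow M k)
    have h2 : (M.choose k : ℝ) ≤ (M : ℝ) ^ k / (Nat.factorial k) := by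
      rw [le_div_iff₀ (by positivity)]
      have h3 : M.choose k * Nat.factorial k = M.descFactorial k := by
        rw [Nat.descFactorial_eq_factorial_mul_choose]; ring
      calc (M.choose k : ℝ) * (Nat.factorial k) = (M.descFactorial k : ℝ) := by
            exact_mod_cast congrArg (Nat.cast : ℕ → ℝ) h3
        _ ≤ (M : ℝ) ^ k := by exact_mod_cast Nat.descFactorial_le_pow M k
    rw [le_div_iff₀ (by positivity)] at h2
    exact h2
  have hMpos : (0 : ℝ) < M := by exact_mod_cast hM
  have h1 : ((k : ℝ) / (9 * M)) ^ k * (M.choose k) ≤ (Real.exp 1 / 9) ^ k := by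
    rw [div_pow, div_pow]
    rw [div_mul_eq_mul_div, div_le_div_iff₀ (by positivity) (by positivity)]
    have hexpand : (9 * (M : ℝ)) ^ k = 9 ^ k * (M : ℝ) ^ k := by rw [mul_pow]
    rw [hexpand]
    have hfk : (0 : ℝ) < (Nat.factorial k) := by positivity
    calc (k : ℝ) ^ k * (M.choose k) * 9 ^ k
        ≤ Real.exp 1 ^ k * (Nat.factorial k) * (M.choose k) * 9 ^ k := by
          have hc : (0 : ℝ) ≤ (M.choose k : ℝ) := Nat.cast_nonneg _
          exact mul_le_mul_of_nonneg_right (mul_le_mul_of_nonneg_right hfact hc)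
            (pow_nonneg (by norm_num) k)
      _ = Real.exp 1 ^ k * ((M.choose k : ℝ) * (Nat.factorial k)) * 9 ^ k := by ring
      _ ≤ Real.exp 1 ^ k * ((M : ℝ) ^ k) * 9 ^ k := by
          have he : (0 : ℝ) ≤ Real.exp 1 ^ k := by positivity
          exact mul_le_mul_of_nonneg_right (mul_le_mul_of_nonneg_left hchoose he)
            (pow_nonneg (by norm_num) k)
      _ = Real.exp 1 ^ k * (9 ^ k * (M : ℝ) ^ k) := by ring
  have hd1 : ((q.natDegree : ℝ) + 1) ≤ (M : ℝ) + 1 := by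
    have : q.natDegree ≤ M := by omega
    exact_mod_cast Nat.succ_le_succ this
  calc ((k : ℝ) / (9 * M)) ^ k * ((q.natDegree + 1) * (9 * (M.choose k)))
      = 9 * ((q.natDegree : ℝ) + 1) * (((k : ℝ) / (9 * M)) ^ k * (M.choose k)) := by ring
    _ ≤ 9 * ((M : ℝ) + 1) * ((Real.exp 1 / 9) ^ k) := by
        refine mul_le_mul ?_ h1 (by positivity) (by positivity)
        nlinarith
    _ = 9 * (M + 1) * (Real.exp 1 / 9) ^ k := by push_cast; ring
end

section
/- Let 0 < ν < 1 and c ∈ ℝ^{n+1}. With F_c defined as F_c(z) = ∑_{i=0}^n c_i ((1−ν)/2+(1+ν)/2·z)^i ((1+ν)/2+(1−ν)/2·z)^{n−i} and Q_c(w) = ∑_{i=0}^n c_i w^i, one has max_{|z|=1} |F_c(z)| = max_{θ ∈ (−π, π]} (1/(1 + (1−ν²)sin²(θ/2)/ν²))^{n/2} · |Q_c(e^{iθ})|. -/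
open Finset

private lemma key17 (n : ℕ) (ν : ℝ) (hν0 : 0 < ν) (hν1 : ν < 1) (c : Fin (n + 1) → ℝ)
    (θ : ℝ) (z : ℂ)
    (hz : z * (((1 + ν) / 2 : ℂ) - ((1 - ν) / 2 : ℂ) * Complex.exp (θ * Complex.I))
        = ((1 + ν) / 2 : ℂ) * Complex.exp (θ * Complex.I) - ((1 - ν) / 2 : ℂ)) :
    norm (∑ i, (c i : ℂ)
            * (((1 - ν) / 2 : ℂ) + ((1 + ν) / 2 : ℂ) * z) ^ (i : ℕ)
            * (((1 + ν) / 2 : ℂ) + ((1 - ν) / 2 : ℂ) * z) ^ (n - (i : ℕ)))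
      = (1 / (1 + (1 - ν ^ 2) * Real.sin (θ / 2) ^ 2 / ν ^ 2)) ^ ((n : ℝ) / 2)
          * norm (∑ i, (c i : ℂ) * Complex.exp (θ * Complex.I) ^ (i : ℕ)) := by
  set w : ℂ := Complex.exp (θ * Complex.I) with hwdef
  set D : ℂ := ((1 + ν) / 2 : ℂ) - ((1 - ν) / 2 : ℂ) * w with hDdef
  have hν' : (ν : ℂ) ≠ 0 := by exact_mod_cast hν0.ne'
  have habsw : norm w = 1 := by
    rw [hwdef]; exact Complex.norm_exp_ofReal_mul_I θ
  have hD : D ≠ 0 := by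
    intro h
    have h1 : ((1 + ν) / 2 : ℂ) = ((1 - ν) / 2 : ℂ) * w := by
      rw [hDdef] at h; linear_combination h
    have := congrArg norm h1
    rw [norm_mul, habsw, mul_one] at this
    have e1 : norm ((1 + ν) / 2 : ℂ) = (1 + ν) / 2 := by
      rw [show ((1 + ν) / 2 : ℂ) = ((((1 + ν) / 2 : ℝ)) : ℂ) by push_cast; ring,
        Complex.norm_real, Real.norm_eq_abs, abs_of_pos (by linarith)]
    have e2 : norm ((1 - ν) / 2 : ℂ) = (1 - ν) / 2 := by
      rw [show ((1 - ν) / 2 : ℂ) = ((((1 - ν) / 2 : ℝ)) : ℂ) by push_cast; ring,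
        Complex.norm_real, Real.norm_eq_abs, abs_of_pos (by linarith)]
    rw [e1, e2] at this
    linarith
  have hA : ((1 - ν) / 2 : ℂ) + ((1 + ν) / 2 : ℂ) * z = (ν : ℂ) * w / D := by
    rw [eq_div_iff hD]
    linear_combination ((1 + ν) / 2 : ℂ) * hz
  have hB : ((1 + ν) / 2 : ℂ) + ((1 - ν) / 2 : ℂ) * z = (ν : ℂ) / D := by
    rw [eq_div_iff hD]
    linear_combination ((1 - ν) / 2 : ℂ) * hz
  have hF : (∑ i : Fin (n + 1), (c i : ℂ)
            * (((1 - ν) / 2 : ℂ) + ((1 + ν) / 2 : ℂ) * z) ^ (i : ℕ)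
            * (((1 + ν) / 2 : ℂ) + ((1 - ν) / 2 : ℂ) * z) ^ (n - (i : ℕ)))
      = ((ν : ℂ) / D) ^ n * ∑ i : Fin (n + 1), (c i : ℂ) * w ^ (i : ℕ) := by
    rw [Finset.mul_sum]
    refine Finset.sum_congr rfl fun i _ => ?_
    rw [hA, hB, show (ν : ℂ) * w / D = ((ν : ℂ) / D) * w by ring, mul_pow]
    have hi : (i : ℕ) + (n - (i : ℕ)) = n := Nat.add_sub_cancel' i.is_le
    have hpow : ((ν:ℂ)/D)^(i:ℕ) * ((ν:ℂ)/D)^(n-(i:ℕ)) = ((ν:ℂ)/D)^n := by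
      rw [← pow_add, hi]
    linear_combination (c i : ℂ) * w ^ (i : ℕ) * hpow
  rw [hF, norm_mul, norm_pow]
  congr 1
  -- abs (ν / D) ^ n = base ^ (n/2)
  set r : ℝ := norm ((ν : ℂ) / D) with hrdef
  have hr0 : 0 ≤ r := norm_nonneg _
  have hcosθ : Real.cos θ = 1 - 2 * Real.sin (θ / 2) ^ 2 := by
    have h1 := Real.cos_sq (θ / 2)
    have h2 := Real.sin_sq_add_cos_sq (θ / 2)
    rw [show 2 * (θ / 2) = θ by ring] at h1
    nlinarith
  have hnormD : Complex.normSq D = ν ^ 2 + (1 - ν ^ 2) * Real.sin (θ / 2) ^ 2 := by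
    have hw : w = (Real.cos θ : ℂ) + (Real.sin θ : ℂ) * Complex.I := by
      rw [hwdef, Complex.exp_mul_I, Complex.ofReal_cos, Complex.ofReal_sin]
    have hDval : D = (((1 + ν) / 2 - (1 - ν) / 2 * Real.cos θ : ℝ) : ℂ)
        + ((-((1 - ν) / 2 * Real.sin θ) : ℝ) : ℂ) * Complex.I := by
      rw [hDdef, hw]; push_cast; ring
    rw [hDval, Complex.normSq_add_mul_I]
    nlinarith [Real.sin_sq_add_cos_sq θ, hcosθ]
  have hden : 0 < ν ^ 2 + (1 - ν ^ 2) * Real.sin (θ / 2) ^ 2 := by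
    have h1 : (0:ℝ) ≤ (1 - ν ^ 2) * Real.sin (θ / 2) ^ 2 :=
      mul_nonneg (by nlinarith) (sq_nonneg _)
    nlinarith
  have hr2 : r ^ 2 = 1 / (1 + (1 - ν ^ 2) * Real.sin (θ / 2) ^ 2 / ν ^ 2) := by
    rw [hrdef, Complex.sq_norm, map_div₀, Complex.normSq_ofReal, hnormD]
    have hν2 : (0:ℝ) < ν ^ 2 := by positivity
    field_simp
  have hrn : ((r ^ 2 : ℝ)) ^ ((n : ℝ) / 2) = r ^ n := by
    rw [show (r : ℝ) ^ 2 = r ^ (2:ℝ) from by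
        rw [← Real.rpow_natCast r 2]; norm_num,
      ← Real.rpow_mul hr0, show (2:ℝ) * ((n : ℝ) / 2) = (n : ℝ) by ring,
      Real.rpow_natCast]
  rw [← hr2, hrn]

/-- `max_{|z|=1} |F_c(z)| = max_{θ ∈ (−π,π]} (1/(1 + (1−ν²)sin²(θ/2)/ν²))^{n/2} |Q_c(e^{iθ})|`. -/
theorem stmt17 (n : ℕ) (ν : ℝ) (hν0 : 0 < ν) (hν1 : ν < 1) (c : Fin (n + 1) → ℝ) :
    sSup {y : ℝ | ∃ z : ℂ, norm z = 1 ∧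
        y = norm (∑ i, (c i : ℂ)
            * (((1 - ν) / 2 : ℂ) + ((1 + ν) / 2 : ℂ) * z) ^ (i : ℕ)
            * (((1 + ν) / 2 : ℂ) + ((1 - ν) / 2 : ℂ) * z) ^ (n - (i : ℕ)))}
      = sSup {y : ℝ | ∃ θ ∈ Set.Ioc (-Real.pi) Real.pi,
          y = (1 / (1 + (1 - ν ^ 2) * Real.sin (θ / 2) ^ 2 / ν ^ 2)) ^ ((n : ℝ) / 2)
              * norm (∑ i, (c i : ℂ)
                  * Complex.exp (θ * Complex.I) ^ (i : ℕ))} := by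
  congr 1
  ext y
  constructor
  · rintro ⟨z, hz1, rfl⟩
    -- forward: from z construct θ
    have hB : (((1 + ν) / 2 : ℂ) + ((1 - ν) / 2 : ℂ) * z) ≠ 0 := by
      intro h
      have h1 : ((1 + ν) / 2 : ℂ) = -(((1 - ν) / 2 : ℂ) * z) := by linear_combination h
      have := congrArg norm h1
      rw [norm_neg, norm_mul, hz1, mul_one] at this
      rw [show ((1 + ν) / 2 : ℂ) = ((((1 + ν) / 2 : ℝ)) : ℂ) by push_cast; ring,
        show ((1 - ν) / 2 : ℂ) = ((((1 - ν) / 2 : ℝ)) : ℂ) by push_cast; ring,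
        Complex.norm_real, Real.norm_eq_abs, Complex.norm_real, Real.norm_eq_abs,
        abs_of_pos (by linarith : (0:ℝ) < (1 + ν) / 2),
        abs_of_pos (by linarith : (0:ℝ) < (1 - ν) / 2)] at this
      linarith
    set w : ℂ := (((1 - ν) / 2 : ℂ) + ((1 + ν) / 2 : ℂ) * z) / (((1 + ν) / 2 : ℂ) + ((1 - ν) / 2 : ℂ) * z) with hwdef
    have hz2 : Complex.normSq z = 1 := by
      rw [← Complex.sq_norm, hz1]; norm_num
    have habsw : norm w = 1 := by
      rw [hwdef, norm_div, div_eq_one_iff_eq (by simpa using hB)]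
      have hzz : z * (starRingEnd ℂ) z = 1 := by
        rw [Complex.mul_conj, hz2, Complex.ofReal_one]
      have hmc : ((Complex.normSq (((1 - ν) / 2 : ℂ) + ((1 + ν) / 2 : ℂ) * z) : ℝ) : ℂ)
          = ((Complex.normSq (((1 + ν) / 2 : ℂ) + ((1 - ν) / 2 : ℂ) * z) : ℝ) : ℂ) := by
        rw [← Complex.mul_conj, ← Complex.mul_conj]
        simp only [map_add, map_mul, map_div₀, map_sub, map_one, Complex.conj_ofReal,
          Complex.conj_ofNat]
        linear_combination (((1 + (ν:ℂ)) / 2) ^ 2 - ((1 - (ν:ℂ)) / 2) ^ 2) * hzz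
      have hns := Complex.ofReal_inj.mp hmc
      have := congrArg Real.sqrt hns
      rwa [← Complex.norm_def, ← Complex.norm_def] at this
    refine ⟨Complex.arg w, Complex.arg_mem_Ioc w, ?_⟩
    have hexp : Complex.exp ((Complex.arg w : ℂ) * Complex.I) = w := by
      have := Complex.norm_mul_exp_arg_mul_I w
      rwa [habsw, Complex.ofReal_one, one_mul] at this
    rw [← key17 n ν hν0 hν1 c (Complex.arg w) z]
    rw [hexp]
    have hwB : w * (((1 + ν) / 2 : ℂ) + ((1 - ν) / 2 : ℂ) * z)
        = ((1 - ν) / 2 : ℂ) + ((1 + ν) / 2 : ℂ) * z := by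
      rw [hwdef, div_mul_cancel₀ _ hB]
    linear_combination -hwB
  · rintro ⟨θ, hθ, rfl⟩
    -- backward: construct z
    set w : ℂ := Complex.exp (θ * Complex.I) with hwdef
    have habsw : norm w = 1 := Complex.norm_exp_ofReal_mul_I θ
    have hw2 : Complex.normSq w = 1 := by
      rw [← Complex.sq_norm, habsw]; norm_num
    set D : ℂ := ((1 + ν) / 2 : ℂ) - ((1 - ν) / 2 : ℂ) * w with hDdef
    have hD : D ≠ 0 := by
      intro h
      have h1 : ((1 + ν) / 2 : ℂ) = ((1 - ν) / 2 : ℂ) * w := by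
        rw [hDdef] at h; linear_combination h
      have := congrArg norm h1
      rw [norm_mul, habsw, mul_one,
        show ((1 + ν) / 2 : ℂ) = ((((1 + ν) / 2 : ℝ)) : ℂ) by push_cast; ring,
        show ((1 - ν) / 2 : ℂ) = ((((1 - ν) / 2 : ℝ)) : ℂ) by push_cast; ring,
        Complex.norm_real, Real.norm_eq_abs, Complex.norm_real, Real.norm_eq_abs,
        abs_of_pos (by linarith : (0:ℝ) < (1 + ν) / 2),
        abs_of_pos (by linarith : (0:ℝ) < (1 - ν) / 2)] at this
      linarith
    set z : ℂ := (((1 + ν) / 2 : ℂ) * w - ((1 - ν) / 2 : ℂ)) / D with hzdef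
    have habsz : norm z = 1 := by
      rw [hzdef, norm_div, div_eq_one_iff_eq (by simpa using hD)]
      have hww : w * (starRingEnd ℂ) w = 1 := by
        rw [Complex.mul_conj, hw2, Complex.ofReal_one]
      have hmc : ((Complex.normSq (((1 + ν) / 2 : ℂ) * w - ((1 - ν) / 2 : ℂ)) : ℝ) : ℂ)
          = ((Complex.normSq D : ℝ) : ℂ) := by
        rw [← Complex.mul_conj, ← Complex.mul_conj, hDdef]
        simp only [map_add, map_mul, map_div₀, map_sub, map_one, Complex.conj_ofReal,
          Complex.conj_ofNat]
        linear_combination (((1 + (ν:ℂ)) / 2) ^ 2 - ((1 - (ν:ℂ)) / 2) ^ 2) * hww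
      have hns := Complex.ofReal_inj.mp hmc
      have := congrArg Real.sqrt hns
      rwa [← Complex.norm_def, ← Complex.norm_def] at this
    refine ⟨z, habsz, ?_⟩
    exact (key17 n ν hν0 hν1 c θ z (by rw [hzdef, div_mul_cancel₀ _ hD])).symm
end

section
/- Let 0 < ν, ε < 1 and n ∈ ℕ satisfy 2ln(2/ε)/n ≤ ν ≤ 1 − 2ln(2/ε)/n. Then for every real vector c = (c_0, …, c_n) with ∑_{i=0}^n c_i = 0, ∑_{i=0}^n |c_i| ≤ 2, and |c_0| > 2ε, the function F_c(z) = ∑_{i=0}^n c_i ((1−ν)/2 + (1+ν)/2·z)^i ((1+ν)/2 + (1−ν)/2·z)^{n−i} satisfies max_{|z|=1} |F_c(z)| ≥ ε · exp(−C · ln^{2/3}(1/ε) · (n(1−ν²))^{1/3} / ν^{2/3}) for some absolute constant C > 0. -/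
open Finset Polynomial

theorem one_sub_cos_le' (x : ℝ) : 1 - Real.cos x ≤ x^2/2 := by
  have h := Real.cos_sq (x/2)
  rw [show 2*(x/2) = x by ring] at h
  nlinarith [Real.sin_sq_le_sq (x := x/2), Real.sin_sq_add_cos_sq (x/2)]

theorem sum_eval_roots (k : ℕ) (hk : 0 < k) (P : Polynomial ℂ) (hP : P.natDegree < k) :
    ∑ t ∈ Finset.range k, P.eval (Complex.exp (2*Real.pi*Complex.I/k) ^ t) = k * P.coeff 0 := by
  set ζ := Complex.exp (2*Real.pi*Complex.I/k) with hζdef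
  have hζ : IsPrimitiveRoot ζ k := Complex.isPrimitiveRoot_exp k hk.ne'
  have hev : ∀ x : ℂ, P.eval x = ∑ d ∈ Finset.range (P.natDegree + 1), P.coeff d * x ^ d :=
    fun x => P.eval_eq_sum_range x
  calc ∑ t ∈ Finset.range k, P.eval (ζ ^ t)
      = ∑ t ∈ Finset.range k, ∑ d ∈ Finset.range (P.natDegree + 1), P.coeff d * (ζ ^ d) ^ t := by
        refine Finset.sum_congr rfl fun t _ => ?_
        rw [hev]
        refine Finset.sum_congr rfl fun d _ => ?_
        rw [← pow_mul, ← pow_mul, Nat.mul_comm]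
    _ = ∑ d ∈ Finset.range (P.natDegree + 1), P.coeff d * ∑ t ∈ Finset.range k, (ζ ^ d) ^ t := by
        rw [Finset.sum_comm]
        exact Finset.sum_congr rfl fun d _ => (Finset.mul_sum _ _ _).symm
    _ = k * P.coeff 0 := by
        rw [Finset.sum_eq_single 0]
        · simp [mul_comm]
        · intro d hd hd0
          have hdlt : d < k := lt_of_le_of_lt (Nat.lt_succ_iff.mp (Finset.mem_range.mp hd)) hP
          have h1 : (ζ ^ d) ≠ 1 := hζ.pow_ne_one_of_pos_of_lt hd0 hdlt
          have h2 : (ζ ^ d) ^ k = 1 := by rw [← pow_mul, mul_comm, pow_mul, hζ.pow_eq_one, one_pow]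
          rw [geom_sum_eq h1, h2, sub_self, zero_div, mul_zero]
        · intro h; simp at h

theorem arcQ (n m : ℕ) (hm : 0 < m) (c : Fin (n+1) → ℝ) (hsum : ∑ i, |c i| ≤ 2) :
    ∃ ψ : ℝ, |ψ| ≤ Real.pi / m ∧
      |c 0| ^ m ≤ 2^(m-1) * ‖∑ i, (c i : ℂ) * Complex.exp (ψ * Complex.I) ^ (i:ℕ)‖ := by
  classical
  set Q : Polynomial ℂ := ∑ i : Fin (n+1), C ((c i : ℂ)) * X^(i:ℕ) with hQdef
  have hQeval : ∀ x : ℂ, Q.eval x = ∑ i : Fin (n+1), (c i : ℂ) * x^(i:ℕ) := by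
    intro x; rw [hQdef, eval_finset_sum]; simp
  have hQbound : ∀ x : ℂ, ‖x‖ = 1 → ‖Q.eval x‖ ≤ 2 := by
    intro x hx
    rw [hQeval]
    calc ‖∑ i : Fin (n+1), (c i : ℂ) * x^(i:ℕ)‖
        ≤ ∑ i : Fin (n+1), ‖(c i : ℂ) * x^(i:ℕ)‖ := by
          exact norm_sum_le _ _
      _ = ∑ i : Fin (n+1), |c i| := by
          refine Finset.sum_congr rfl fun i _ => ?_
          rw [norm_mul, norm_pow, hx, one_pow, mul_one, Complex.norm_real, Real.norm_eq_abs]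
      _ ≤ 2 := hsum
  have hQdeg : Q.natDegree ≤ n := by
    refine natDegree_sum_le_of_forall_le _ _ fun i _ => ?_
    calc (C ((c i : ℂ)) * X^(i:ℕ)).natDegree ≤ (i:ℕ) := natDegree_C_mul_X_pow_le _ _
      _ ≤ n := Nat.lt_succ_iff.mp i.isLt
  have hQ0 : Q.eval 0 = (c 0 : ℂ) := by
    rw [hQeval]
    rw [Fintype.sum_eq_single (0 : Fin (n+1))]
    · simp
    · intro i hi
      have : (i : ℕ) ≠ 0 := fun h => hi (Fin.ext h)
      simp [zero_pow this]
  set ω : ℂ := Complex.exp (2*Real.pi*Complex.I/m) with hωdef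
  have hωm : ω ^ (m:ℕ) = 1 := by
    rw [hωdef, ← Complex.exp_nat_mul]
    rw [mul_div_cancel₀ _ (by exact_mod_cast hm.ne' : (m:ℂ) ≠ 0)]
    exact Complex.exp_two_pi_mul_I
  have hωne : ω ≠ 0 := Complex.exp_ne_zero _
  set P : Polynomial ℂ := ∏ j ∈ Finset.range m, Q.comp (C (ω^j) * X) with hPdef
  have hPeval : ∀ x : ℂ, P.eval x = ∏ j ∈ Finset.range m, Q.eval (ω^j * x) := by
    intro x; rw [hPdef, eval_prod]
    exact Finset.prod_congr rfl fun j _ => by rw [eval_comp, eval_mul, eval_C, eval_X]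
  have hPdeg : P.natDegree ≤ n * m := by
    calc P.natDegree ≤ ∑ j ∈ Finset.range m, (Q.comp (C (ω^j) * X)).natDegree :=
          natDegree_prod_le _ _
      _ ≤ ∑ j ∈ Finset.range m, n := by
          refine Finset.sum_le_sum fun j _ => ?_
          calc (Q.comp (C (ω^j) * X)).natDegree ≤ Q.natDegree * (C (ω^j) * X).natDegree :=
                natDegree_comp_le
            _ ≤ n * 1 := by
                refine Nat.mul_le_mul hQdeg ?_
                calc (C (ω^j) * X).natDegree ≤ (C (ω^j)).natDegree + X.natDegree :=
                      natDegree_mul_le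
                  _ ≤ 1 := by simp
            _ = n := by ring
      _ = n * m := by rw [Finset.sum_const, Finset.card_range]; ring
  have hP0 : P.coeff 0 = (c 0 : ℂ)^m := by
    rw [coeff_zero_eq_eval_zero, hPeval]
    rw [Finset.prod_congr rfl (fun j _ => by rw [mul_zero, hQ0] : ∀ j ∈ Finset.range m, Q.eval (ω^j * 0) = (c 0 : ℂ))]
    rw [Finset.prod_const, Finset.card_range]
  set k : ℕ := n * m + 1 with hkdef
  have hk : 0 < k := Nat.succ_pos _
  have hkdeg : P.natDegree < k := Nat.lt_succ_of_le hPdeg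
  have hsumev := sum_eval_roots k hk P hkdeg
  set ζ : ℂ := Complex.exp (2*Real.pi*Complex.I/k) with hζdef
  -- exists t with |c0|^m ≤ |P.eval (ζ^t)|
  have hex : ∃ t ∈ Finset.range k, |c 0|^m ≤ ‖P.eval (ζ ^ t)‖ := by
    by_contra hcon
    push_neg at hcon
    have hlt : ∑ t ∈ Finset.range k, ‖P.eval (ζ ^ t)‖ < k * |c 0|^m := by
      calc ∑ t ∈ Finset.range k, ‖P.eval (ζ ^ t)‖
          < ∑ t ∈ Finset.range k, |c 0|^m :=
            Finset.sum_lt_sum_of_nonempty ⟨0, Finset.mem_range.mpr hk⟩ hcon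
        _ = k * |c 0|^m := by rw [Finset.sum_const, Finset.card_range, nsmul_eq_mul]
    have hge : (k:ℝ) * |c 0|^m ≤ ∑ t ∈ Finset.range k, ‖P.eval (ζ ^ t)‖ := by
      calc (k:ℝ) * |c 0|^m = ‖(k:ℂ) * P.coeff 0‖ := by
            rw [norm_mul, hP0, norm_pow, Complex.norm_real, Real.norm_eq_abs, Complex.norm_natCast]
        _ = ‖∑ t ∈ Finset.range k, P.eval (ζ ^ t)‖ := by rw [hsumev]
        _ ≤ ∑ t ∈ Finset.range k, ‖P.eval (ζ ^ t)‖ := norm_sum_le _ _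
    linarith
  obtain ⟨t, _, ht⟩ := hex
  -- angle of ζ^t
  set φ : ℝ := 2*Real.pi*t/k with hφdef
  have hu : ζ ^ t = Complex.exp ((φ:ℂ) * Complex.I) := by
    rw [hζdef, ← Complex.exp_nat_mul]
    congr 1
    push_cast [hφdef]
    ring
  set r : ℤ := round (φ * m / (2*Real.pi)) with hrdef
  set ψ : ℝ := φ - 2*Real.pi*r/m with hψdef
  have hπ : (0:ℝ) < Real.pi := Real.pi_pos
  have hmR : (0:ℝ) < m := by exact_mod_cast hm
  have hψle : |ψ| ≤ Real.pi / m := by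
    have h1 : |φ * m / (2*Real.pi) - r| ≤ 1/2 := abs_sub_round _
    have h2 : ψ = (φ * m / (2*Real.pi) - r) * (2*Real.pi/m) := by
      rw [hψdef]; field_simp
    rw [h2, abs_mul, abs_of_pos (by positivity : (0:ℝ) < 2*Real.pi/m)]
    calc |φ * m / (2*Real.pi) - r| * (2*Real.pi/m) ≤ (1/2) * (2*Real.pi/m) := by
          exact mul_le_mul_of_nonneg_right h1 (by positivity)
      _ = Real.pi / m := by ring
  refine ⟨ψ, hψle, ?_⟩
  set w : ℂ := Complex.exp ((ψ:ℂ) * Complex.I) with hwdef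
  have hwabs : ‖w‖ = 1 := by
    rw [hwdef]; exact Complex.norm_exp_ofReal_mul_I ψ
  have hζw : ζ ^ t = w * ω ^ r := by
    rw [hu, hwdef, hωdef, ← Complex.exp_int_mul, ← Complex.exp_add]
    congr 1
    have : φ = ψ + 2*Real.pi*r/m := by rw [hψdef]; ring
    rw [this]
    push_cast
    ring
  set j0 : ℕ := ((-r) % (m:ℤ)).toNat with hj0def
  have hj0m : (j0 : ℤ) = (-r) % (m:ℤ) := by
    rw [hj0def]
    exact Int.toNat_of_nonneg (Int.emod_nonneg _ (by exact_mod_cast hm.ne'))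
  have hj0lt : j0 < m := by
    have := Int.emod_lt_of_pos (-r) (by exact_mod_cast hm : (0:ℤ) < (m:ℤ))
    omega
  have hωj0 : ω ^ j0 * ζ ^ t = w := by
    have hz1 : ω ^ (j0:ℤ) = ω ^ (-r) := by
      have hdiv : (j0:ℤ) - (-r) = (m:ℤ) * (-((-r) / m)) := by
        rw [hj0m]
        have := Int.emod_add_mul_ediv (-r) (m:ℤ)
        linarith [this]
      have : ω ^ ((j0:ℤ) - (-r)) = 1 := by
        rw [hdiv, zpow_mul]
        norm_cast
        rw [hωm, one_zpow]
      calc ω ^ (j0:ℤ) = ω ^ ((j0:ℤ) - (-r)) * ω ^ (-r) := by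
            rw [← zpow_add₀ hωne]; congr 1; ring
        _ = ω ^ (-r) := by rw [this, one_mul]
    calc ω ^ j0 * ζ ^ t = ω ^ ((j0:ℤ)) * (w * ω ^ r) := by rw [hζw, zpow_natCast]
      _ = ω ^ (-r) * (w * ω ^ r) := by rw [hz1]
      _ = w * (ω ^ (-r) * ω ^ r) := by ring
      _ = w := by rw [← zpow_add₀ hωne, neg_add_cancel, zpow_zero, mul_one]
  -- product bound
  have habs_pts : ∀ j : ℕ, ‖ω ^ j * ζ ^ t‖ = 1 := by
    intro j
    rw [norm_mul, norm_pow, hωdef]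
    rw [hu]
    rw [Complex.norm_exp, Complex.norm_exp]
    have h1 : (2*(Real.pi:ℂ)*Complex.I/m).re = 0 := by
      simp [Complex.div_re]
    have h2 : ((φ:ℂ) * Complex.I).re = 0 := by simp
    rw [h1, h2, Real.exp_zero, one_pow, one_mul]
  have hprod : ‖P.eval (ζ ^ t)‖ ≤
      ‖Q.eval w‖ * 2^(m-1) := by
    rw [hPeval, norm_prod]
    rw [← Finset.mul_prod_erase (Finset.range m) _ (Finset.mem_range.mpr hj0lt)]
    rw [hωj0]
    refine mul_le_mul_of_nonneg_left ?_ (norm_nonneg _)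
    calc ∏ j ∈ (Finset.range m).erase j0, ‖Q.eval (ω ^ j * ζ ^ t)‖
        ≤ 2 ^ ((Finset.range m).erase j0).card := by
          rw [← Finset.prod_const]
          exact Finset.prod_le_prod (fun j _ => norm_nonneg _)
            (fun j _ => hQbound _ (habs_pts j))
      _ = 2 ^ (m - 1) := by
          rw [Finset.card_erase_of_mem (Finset.mem_range.mpr hj0lt), Finset.card_range]
  have := le_trans ht hprod
  rw [hQeval] at this
  calc |c 0|^m ≤ ‖∑ i : Fin (n+1), (c i : ℂ) * w^(i:ℕ)‖ * 2^(m-1) := this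
    _ = 2^(m-1) * ‖∑ i : Fin (n+1), (c i : ℂ) * Complex.exp ((ψ:ℂ)*Complex.I)^(i:ℕ)‖ := by
        rw [hwdef]; ring

theorem aux_exp_ineq (L : ℝ) (hL : 0 ≤ L) : -(3*L) ≤ -(Real.pi^2*L/8) + -L := by
  have h16 : Real.pi^2 ≤ 16 := by nlinarith [Real.pi_le_four, Real.pi_pos.le]
  nlinarith [mul_le_mul_of_nonneg_right h16 hL]

/-- Lower bound for bit-flip noise: there is an absolute constant `C > 0` such that whenever
`2ln(2/ε)/n ≤ ν ≤ 1 − 2ln(2/ε)/n` and `c` satisfies `∑ c_i = 0`, `∑|c_i| ≤ 2`,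
`|c_0| > 2ε`, the function `F_c` attains modulus at least
`ε · exp(−C ln^{2/3}(1/ε) (n(1−ν²))^{1/3} / ν^{2/3})` somewhere on the unit circle. -/
theorem stmt19 :
    ∃ C : ℝ, 0 < C ∧
      ∀ (ν ε : ℝ) (n : ℕ) (c : Fin (n + 1) → ℝ),
        0 < ν → ν < 1 → 0 < ε → ε < 1 →
        2 * Real.log (2 / ε) / n ≤ ν → ν ≤ 1 - 2 * Real.log (2 / ε) / n →
        (∑ i, c i) = 0 → (∑ i, |c i|) ≤ 2 → 2 * ε < |c 0| →
        ∃ z : ℂ, ‖z‖ = 1 ∧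
          ε * Real.exp (-C * Real.log (1 / ε) ^ ((2 : ℝ) / 3)
              * (n * (1 - ν ^ 2)) ^ ((1 : ℝ) / 3) / ν ^ ((2 : ℝ) / 3)) ≤
            ‖∑ i, (c i : ℂ)
              * (((1 - ν) / 2 : ℂ) + ((1 + ν) / 2 : ℂ) * z) ^ (i : ℕ)
              * (((1 + ν) / 2 : ℂ) + ((1 - ν) / 2 : ℂ) * z) ^ (n - (i : ℕ))‖ := by
  refine ⟨3, by norm_num, ?_⟩
  intro ν ε n c hν0 hν1 hε0 hε1 _ _ hsum0 hsumabs hc0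
  -- n ≥ 1
  rcases Nat.eq_zero_or_pos n with hn0 | hn
  · exfalso
    subst hn0
    rw [Fin.sum_univ_one] at hsum0
    rw [hsum0] at hc0
    simp at hc0
    linarith
  have hπ : (0:ℝ) < Real.pi := Real.pi_pos
  have hnR : (0:ℝ) < n := by exact_mod_cast hn
  have hν2 : (0:ℝ) < 1 - ν^2 := by nlinarith
  set L0 : ℝ := Real.log (1/ε) with hL0def
  have hL0 : 0 < L0 := Real.log_pos (by rw [lt_div_iff₀ hε0]; linarith)
  set B : ℝ := (n:ℝ) * (1 - ν^2) with hBdef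
  have hB : 0 < B := by positivity
  set A : ℝ := B / ν^2 with hAdef
  have hA : 0 < A := by positivity
  set x : ℝ := (A / L0) ^ ((1:ℝ)/3) with hxdef
  have hx : 0 < x := Real.rpow_pos_of_pos (by positivity) _
  set m : ℕ := ⌈x⌉₊ with hmdef
  have hm : 0 < m := Nat.ceil_pos.mpr hx
  have hmx : x ≤ (m:ℝ) := Nat.le_ceil x
  have hmx1 : (m:ℝ) ≤ x + 1 := (Nat.ceil_lt_add_one hx.le).le
  have hmR : (0:ℝ) < m := by exact_mod_cast hm
  set L : ℝ := L0 ^ ((2:ℝ)/3) * B ^ ((1:ℝ)/3) / ν ^ ((2:ℝ)/3) with hLdef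
  have hL : 0 < L := by
    have := Real.rpow_pos_of_pos hL0 ((2:ℝ)/3)
    have := Real.rpow_pos_of_pos hB ((1:ℝ)/3)
    have := Real.rpow_pos_of_pos hν0 ((2:ℝ)/3)
    positivity
  -- cube identity
  have hx3 : x^3 = A / L0 := by
    rw [hxdef, ← Real.rpow_natCast ((A / L0) ^ ((1:ℝ)/3)) 3, ← Real.rpow_mul (by positivity)]
    norm_num
  -- x * L0 = L
  have hxL : x * L0 = L := by
    have e1 : ((ν:ℝ)^2) ^ ((1:ℝ)/3) = ν ^ ((2:ℝ)/3) := by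
      rw [← Real.rpow_natCast ν 2, ← Real.rpow_mul hν0.le]
      norm_num
    have e2 : x = B ^ ((1:ℝ)/3) / (ν ^ ((2:ℝ)/3) * L0 ^ ((1:ℝ)/3)) := by
      rw [hxdef, hAdef, div_div, Real.div_rpow hB.le (by positivity),
        Real.mul_rpow (by positivity) hL0.le, e1]
    rw [e2, hLdef]
    have h3 : L0 = L0 ^ ((1:ℝ)/3) * L0 ^ ((2:ℝ)/3) := by
      rw [← Real.rpow_add hL0]
      norm_num
    have hν23 : (0:ℝ) < ν ^ ((2:ℝ)/3) := Real.rpow_pos_of_pos hν0 _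
    have hL013 : (0:ℝ) < L0 ^ ((1:ℝ)/3) := Real.rpow_pos_of_pos hL0 _
    field_simp
    nth_rewrite 1 [h3]
    ring
  have hAx2 : A / x^2 = L := by
    have hA' : A = x^3 * L0 := by rw [hx3]; field_simp
    rw [hA', ← hxL]
    field_simp
  -- apply arcQ
  obtain ⟨ψ, hψle, hQlow⟩ := arcQ n m hm c hsumabs
  set w : ℂ := Complex.exp ((ψ:ℂ) * Complex.I) with hwdef
  have hwabs : ‖w‖ = 1 := Complex.norm_exp_ofReal_mul_I ψ
  set pp : ℝ := (1 - ν)/2 with hppdef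
  set qq : ℝ := (1 + ν)/2 with hqqdef
  have hpp0 : 0 ≤ pp := by rw [hppdef]; linarith
  have hqq0 : 0 < qq := by rw [hqqdef]; linarith
  set D : ℂ := (qq:ℂ) - (pp:ℂ) * w with hDdef
  -- |D| ≥ ν
  have hDge : ν ≤ ‖D‖ := by
    have h1 : ‖(qq:ℂ)‖ - ‖(pp:ℂ) * w‖ ≤ ‖(qq:ℂ) - (pp:ℂ) * w‖ := norm_sub_norm_le _ _
    rw [norm_mul, Complex.norm_real, Complex.norm_real, hwabs,
      Real.norm_eq_abs, Real.norm_eq_abs, abs_of_pos hqq0, abs_of_nonneg hpp0, mul_one] at h1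
    rw [hDdef]
    calc ν = qq - pp := by rw [hqqdef, hppdef]; ring
      _ ≤ _ := h1
  have hD0 : (0:ℝ) < ‖D‖ := lt_of_lt_of_le hν0 hDge
  have hDne : D ≠ 0 := by
    intro h
    rw [h] at hD0
    simp at hD0
  -- |D|^2 computation
  have hD2 : (‖D‖)^2 = ν^2 + (1-ν^2)/2 * (1 - Real.cos ψ) := by
    rw [Complex.sq_norm, hDdef, hwdef, Complex.exp_mul_I, ← Complex.ofReal_cos, ← Complex.ofReal_sin]
    rw [Complex.normSq_apply]
    simp only [Complex.sub_re, Complex.sub_im, Complex.ofReal_re, Complex.ofReal_im,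
      Complex.mul_re, Complex.mul_im, Complex.add_re, Complex.add_im,
      Complex.I_re, Complex.I_im]
    have hsc := Real.sin_sq_add_cos_sq ψ
    rw [hppdef, hqqdef]
    ring_nf
    linear_combination (((1-ν)/2)^2) * hsc
  have hψ2 : ψ^2 ≤ (Real.pi/m)^2 := by
    calc ψ^2 = |ψ|^2 := (sq_abs ψ).symm
      _ ≤ (Real.pi/m)^2 := pow_le_pow_left₀ (abs_nonneg ψ) hψle 2
  have hcosb : 1 - Real.cos ψ ≤ ψ^2/2 := one_sub_cos_le' ψ
  have hmx2 : (1-ν^2)/(m:ℝ)^2 ≤ L * ν^2 / n := by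
    have h1 : (1-ν^2)/(m:ℝ)^2 ≤ (1-ν^2)/x^2 :=
      div_le_div_of_nonneg_left hν2.le (by positivity) (pow_le_pow_left₀ hx.le hmx 2)
    have h2 : (1-ν^2)/x^2 = L * ν^2 / n := by
      rw [← hAx2, hAdef, hBdef]
      field_simp
    linarith
  have hD2' : (‖D‖)^2 ≤ ν^2 * (1 + Real.pi^2 * L / (4*n)) := by
    calc (‖D‖)^2 = ν^2 + (1-ν^2)/2 * (1 - Real.cos ψ) := hD2
      _ ≤ ν^2 + (1-ν^2)/2 * (ψ^2/2) :=
          add_le_add le_rfl (mul_le_mul_of_nonneg_left (by linarith)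
            (by linarith : (0:ℝ) ≤ (1-ν^2)/2))
      _ ≤ ν^2 + (1-ν^2)/2 * ((Real.pi/m)^2/2) :=
          add_le_add le_rfl (mul_le_mul_of_nonneg_left (by linarith)
            (by linarith : (0:ℝ) ≤ (1-ν^2)/2))
      _ = ν^2 + Real.pi^2/4 * ((1-ν^2)/(m:ℝ)^2) := by field_simp; ring
      _ ≤ ν^2 + Real.pi^2/4 * (L * ν^2 / n) :=
          add_le_add le_rfl (mul_le_mul_of_nonneg_left hmx2 (by positivity))
      _ = ν^2 * (1 + Real.pi^2 * L / (4*n)) := by field_simp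
  -- the point z
  set z : ℂ := ((qq:ℂ) * w - (pp:ℂ)) / D with hzdef
  have hzabs : ‖z‖ = 1 := by
    rw [hzdef, norm_div, div_eq_one_iff_eq hD0.ne']
    have e1 : Complex.normSq ((qq:ℂ) * w - (pp:ℂ)) = Complex.normSq D := by
      rw [hDdef, hwdef, Complex.exp_mul_I, ← Complex.ofReal_cos, ← Complex.ofReal_sin]
      simp only [Complex.normSq_apply, Complex.sub_re, Complex.sub_im, Complex.ofReal_re,
        Complex.ofReal_im, Complex.mul_re, Complex.mul_im, Complex.add_re, Complex.add_im,
        Complex.I_re, Complex.I_im]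
      have hsc := Real.sin_sq_add_cos_sq ψ
      rw [hppdef, hqqdef]
      linear_combination ν * hsc
    have e2 := congrArg Real.sqrt e1
    rwa [← Complex.norm_def, ← Complex.norm_def] at e2
  refine ⟨z, hzabs, ?_⟩
  -- Mobius identities
  have hpq : (pp:ℂ) + (qq:ℂ) * z = (ν:ℂ) * w / D := by
    rw [hzdef]
    field_simp
    rw [hDdef, hppdef, hqqdef]
    push_cast
    ring
  have hqp : (qq:ℂ) + (pp:ℂ) * z = (ν:ℂ) / D := by
    rw [hzdef]
    field_simp
    rw [hDdef, hppdef, hqqdef]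
    push_cast
    ring
  -- rewrite the sum
  have hFeq : (∑ i : Fin (n+1), (c i : ℂ)
        * (((1 - (ν:ℂ)) / 2) + ((1 + (ν:ℂ)) / 2) * z) ^ (i : ℕ)
        * (((1 + (ν:ℂ)) / 2) + ((1 - (ν:ℂ)) / 2) * z) ^ (n - (i : ℕ)))
      = (ν:ℂ)^n / D^n * ∑ i : Fin (n+1), (c i : ℂ) * w^(i:ℕ) := by
    rw [Finset.mul_sum]
    refine Finset.sum_congr rfl fun i _ => ?_
    have hi : (i:ℕ) ≤ n := Nat.lt_succ_iff.mp i.isLt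
    have h1 : ((1 - (ν:ℂ)) / 2) + ((1 + (ν:ℂ)) / 2) * z = (ν:ℂ) * w / D := by
      rw [← hpq, hppdef, hqqdef]
      push_cast
      ring
    have h2 : ((1 + (ν:ℂ)) / 2) + ((1 - (ν:ℂ)) / 2) * z = (ν:ℂ) / D := by
      rw [← hqp, hppdef, hqqdef]
      push_cast
      ring
    have h3 : ((ν:ℂ)*w/D)^(i:ℕ) * ((ν:ℂ)/D)^(n-(i:ℕ)) = (ν:ℂ)^n/D^n * w^(i:ℕ) := by
      rw [div_pow, div_pow, mul_pow, div_mul_div_comm]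
      rw [show (ν:ℂ)^(i:ℕ) * w^(i:ℕ) * (ν:ℂ)^(n-(i:ℕ))
          = ((ν:ℂ)^(i:ℕ) * (ν:ℂ)^(n-(i:ℕ))) * w^(i:ℕ) from by ring]
      rw [← pow_add, ← pow_add, Nat.add_sub_cancel' hi]
      ring
    rw [h1, h2, mul_assoc, h3]
    ring
  set aQ : ℝ := ‖∑ i : Fin (n+1), (c i : ℂ) * w^(i:ℕ)‖ with haQdef
  have habs : ‖∑ i : Fin (n+1), (c i : ℂ)
        * (((1 - (ν:ℂ)) / 2) + ((1 + (ν:ℂ)) / 2) * z) ^ (i : ℕ)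
        * (((1 + (ν:ℂ)) / 2) + ((1 - (ν:ℂ)) / 2) * z) ^ (n - (i : ℕ))‖
      = ν^n / (‖D‖)^n * aQ := by
    rw [hFeq, norm_mul, norm_div, norm_pow, norm_pow, Complex.norm_real, Real.norm_eq_abs, abs_of_pos hν0, haQdef]
  -- lower bound for aQ
  have h2eps : 2 * ε^m ≤ aQ := by
    have h1 : (2*ε)^m ≤ |c 0|^m := pow_le_pow_left₀ (by positivity) hc0.le m
    have h2 : (2:ℝ)^(m-1) * (2 * ε^m) ≤ 2^(m-1) * aQ := by
      have hmm : m - 1 + 1 = m := Nat.succ_pred_eq_of_pos hm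
      calc (2:ℝ)^(m-1) * (2 * ε^m) = 2^(m-1+1) * ε^m := by rw [pow_succ]; ring
        _ = (2*ε)^m := by rw [hmm, mul_pow]
        _ ≤ |c 0|^m := h1
        _ ≤ 2^(m-1) * aQ := hQlow
    exact le_of_mul_le_mul_left h2 (by positivity)
  -- lower bound for the kernel factor
  have hED : Real.exp (-(Real.pi^2*L/8)) * (‖D‖)^n ≤ ν^n := by
    have hsq : (Real.exp (-(Real.pi^2*L/8)) * (‖D‖)^n)^2 ≤ (ν^n)^2 := by
      have e1 : ((‖D‖)^n)^2 = ((‖D‖)^2)^n := by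
        rw [← pow_mul, ← pow_mul, Nat.mul_comm]
      have e2 : ((‖D‖)^2)^n ≤ (ν^2 * (1 + Real.pi^2 * L / (4*n)))^n :=
        pow_le_pow_left₀ (sq_nonneg _) hD2' n
      have e3 : (1 + Real.pi^2 * L / (4*n))^n ≤ Real.exp (Real.pi^2 * L / 4) := by
        calc (1 + Real.pi^2 * L / (4*n))^n ≤ (Real.exp (Real.pi^2 * L / (4*n)))^n := by
              apply pow_le_pow_left₀ (by positivity)
              rw [add_comm]
              exact Real.add_one_le_exp _
          _ = Real.exp ((n:ℝ) * (Real.pi^2 * L / (4*n))) := by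
              rw [← Real.exp_nat_mul]
          _ = Real.exp (Real.pi^2 * L / 4) := by
              congr 1
              have hn0 : (n:ℝ) ≠ 0 := hnR.ne'
              field_simp
      have e4 : (Real.exp (-(Real.pi^2*L/8)))^2 = Real.exp (-(Real.pi^2*L/4)) := by
        rw [← Real.exp_nat_mul]
        congr 1
        push_cast
        ring
      calc (Real.exp (-(Real.pi^2*L/8)) * (‖D‖)^n)^2
          = (Real.exp (-(Real.pi^2*L/8)))^2 * ((‖D‖)^2)^n := by rw [mul_pow, e1]
        _ ≤ Real.exp (-(Real.pi^2*L/4)) * ((ν^2)^n * Real.exp (Real.pi^2 * L / 4)) := by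
            rw [e4]
            refine mul_le_mul_of_nonneg_left ?_ (Real.exp_nonneg _)
            calc ((‖D‖)^2)^n ≤ (ν^2 * (1 + Real.pi^2 * L / (4*n)))^n := e2
              _ = (ν^2)^n * (1 + Real.pi^2 * L / (4*n))^n := mul_pow _ _ _
              _ ≤ (ν^2)^n * Real.exp (Real.pi^2 * L / 4) :=
                  mul_le_mul_of_nonneg_left e3 (by positivity)
        _ = (ν^2)^n * (Real.exp (-(Real.pi^2*L/4)) * Real.exp (Real.pi^2*L/4)) := by ring
        _ = (ν^n)^2 := by
            rw [← Real.exp_add, show -(Real.pi^2*L/4) + Real.pi^2*L/4 = 0 from by ring,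
              Real.exp_zero, mul_one, ← pow_mul, ← pow_mul, Nat.mul_comm]
    exact le_of_pow_le_pow_left₀ (two_ne_zero) (by positivity) hsq
  have hdiv : Real.exp (-(Real.pi^2*L/8)) ≤ ν^n / (‖D‖)^n := by
    rw [le_div_iff₀ (by positivity)]
    exact hED
  -- ε^m lower bound
  have hL0neg : Real.log ε = -L0 := by
    rw [hL0def, one_div, Real.log_inv]
    ring
  have hepsm : ε * Real.exp (-L) ≤ ε^m := by
    have e1 : ε ^ (x+1 : ℝ) = ε * Real.exp (-L) := by
      rw [Real.rpow_add hε0, Real.rpow_one, Real.rpow_def_of_pos hε0, hL0neg, ← hxL]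
      ring_nf
    calc ε * Real.exp (-L) = ε ^ (x+1 : ℝ) := e1.symm
      _ ≤ ε ^ ((m:ℝ)) := Real.rpow_le_rpow_of_exponent_ge hε0 hε1.le hmx1
      _ = ε ^ m := Real.rpow_natCast ε m
  -- final chain
  rw [habs]
  have hπ4 : Real.pi ≤ 4 := Real.pi_le_four
  calc ε * Real.exp (-3 * L0 ^ ((2:ℝ)/3) * B ^ ((1:ℝ)/3) / ν ^ ((2:ℝ)/3))
      = ε * Real.exp (-(3*L)) := by
        rw [show (-3 * L0^((2:ℝ)/3) * B^((1:ℝ)/3) / ν^((2:ℝ)/3)) = -(3*L) from by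
          rw [hLdef]; ring]
    _ ≤ Real.exp (-(Real.pi^2*L/8)) * (2 * (ε * Real.exp (-L))) := by
        rw [show Real.exp (-(Real.pi^2*L/8)) * (2 * (ε * Real.exp (-L)))
            = 2 * ε * Real.exp (-(Real.pi^2*L/8) + -L) from by rw [Real.exp_add]; ring]
        have hle : Real.exp (-(3*L)) ≤ Real.exp (-(Real.pi^2*L/8) + -L) :=
          Real.exp_le_exp.mpr (aux_exp_ineq L hL.le)
        have h0 : 0 ≤ ε * Real.exp (-(Real.pi^2*L/8) + -L) :=
          mul_nonneg hε0.le (Real.exp_nonneg _)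
        have h1 : ε * Real.exp (-(3*L)) ≤ ε * Real.exp (-(Real.pi^2*L/8) + -L) :=
          mul_le_mul_of_nonneg_left hle hε0.le
        rw [show 2 * ε * Real.exp (-(Real.pi^2*L/8) + -L)
            = ε * Real.exp (-(Real.pi^2*L/8) + -L) + ε * Real.exp (-(Real.pi^2*L/8) + -L)
            from by ring]
        linarith
    _ ≤ Real.exp (-(Real.pi^2*L/8)) * (2 * ε^m) :=
        mul_le_mul_of_nonneg_left (mul_le_mul_of_nonneg_left hepsm (by norm_num))
          (Real.exp_nonneg _)
    _ = Real.exp (-(Real.pi^2*L/8)) * (2 * ε^m) := rfl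
    _ ≤ (ν^n / (‖D‖)^n) * aQ := by
        exact mul_le_mul hdiv h2eps (mul_nonneg (by norm_num) (pow_nonneg hε0.le m))
          (div_nonneg (pow_nonneg hν0.le n) (pow_nonneg (norm_nonneg _) n))
end
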